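/- arXiv:1012.4210 — 4 statements merged into one kernel-verified Lean document; each statement's English description precedes it below -/
import Mathlib

section
/- Let n ≥ 2 and let D = (d_1, d_2, …, d_n) be a nondecreasing sequence of nonnegative integers with sum S_n = d_1 + ⋯ + d_n, and let B_n = n(n−1)/2. Then there exist nonnegative integers g and f and an n×n matrix M of nonnegative integers with zero diagonal whose i-th row sum equals d_i for every i, such that g ≤ M(i,j) + M(j,i) ≤ f for all i ≠ j, where f satisfies max(⌈S_n/B_n⌉, ⌈d_n/(n−1)⌉) ≤ f ≤ 2⌈d_n/(n−1)⌉ and 0 ≤ g ≤ f. -/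
/-- Auxiliary: the "spread" entry `a*(k+1)/m - a*k/m`. -/
private def spreadT (m a k : ℕ) : ℕ := a * (k + 1) / m - a * k / m

private lemma spreadT_sum (m a : ℕ) (hm : 1 ≤ m) :
    ∑ k ∈ Finset.range m, spreadT m a k = a := by
  have hmono : Monotone (fun k : ℕ => a * k / m) := by
    intro x y hxy
    exact Nat.div_le_div_right (Nat.mul_le_mul_left _ hxy)
  have := Finset.sum_range_tsub (f := fun k : ℕ => a * k / m) hmono m
  simp only [spreadT]
  rw [this]
  simp [Nat.mul_div_cancel _ hm]

private lemma ceil_div_mul_ge (m a : ℕ) (hm : 1 ≤ m) : a ≤ m * ((a + m - 1) / m) := by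
  have h1 := Nat.div_add_mod (a + m - 1) m
  have h2 : (a + m - 1) % m < m := Nat.mod_lt _ (by omega)
  omega

private lemma spreadT_le (m a k : ℕ) (hm : 1 ≤ m) :
    spreadT m a k ≤ (a + m - 1) / m := by
  have hac : a ≤ m * ((a + m - 1) / m) := ceil_div_mul_ge m a hm
  have key : a * (k + 1) / m ≤ a * k / m + (a + m - 1) / m := by
    have h1 : a * (k + 1) = a * k + a := by ring
    calc a * (k + 1) / m ≤ (a * k + m * ((a + m - 1) / m)) / m := by
          rw [h1]; exact Nat.div_le_div_right (by omega)
      _ = a * k / m + (a + m - 1) / m := by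
          rw [Nat.add_mul_div_left _ _ (by omega : 0 < m)]
  simp only [spreadT]
  exact Nat.sub_le_iff_le_add.mpr (key.trans_eq (Nat.add_comm _ _))

/-- For `n ≥ 2` and a nondecreasing `D` with sum `S = ∑ D i` and
`B = n(n-1)/2`, there exist nonnegative integers `g ≤ f` and a realization `M` of `D` with
`g ≤ M i j + M j i ≤ f` for all `i ≠ j`, where
`max(⌈S/B⌉, ⌈d_n/(n-1)⌉) ≤ f ≤ 2⌈d_n/(n-1)⌉` and `0 ≤ g ≤ f`. -/
theorem exists_realization_with_fg_bounds (n : ℕ) (hn : 2 ≤ n) (D : Fin n → ℕ)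
    (hD : Monotone D) :
    ∃ g f : ℕ, ∃ M : Fin n → Fin n → ℕ,
      (∀ i, M i i = 0) ∧
      (∀ i, ∑ j, M i j = D i) ∧
      (∀ i j, i ≠ j → g ≤ M i j + M j i ∧ M i j + M j i ≤ f) ∧
      max (((∑ i, D i) + n * (n - 1) / 2 - 1) / (n * (n - 1) / 2))
          ((D ⟨n - 1, by omega⟩ + n - 2) / (n - 1)) ≤ f ∧
      f ≤ 2 * ((D ⟨n - 1, by omega⟩ + n - 2) / (n - 1)) ∧
      0 ≤ g ∧ g ≤ f := by
  obtain ⟨m, rfl⟩ : ∃ m, n = m + 1 := ⟨n - 1, by omega⟩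
  have hm : 1 ≤ m := by omega
  set dmax : ℕ := D ⟨m, by omega⟩ with hdmax
  set c : ℕ := (dmax + m - 1) / m with hc
  have hDle : ∀ i : Fin (m + 1), D i ≤ dmax := by
    intro i
    exact hD (by simpa [Fin.le_def] using Nat.lt_succ_iff.mp i.isLt)
  -- the matrix
  set M : Fin (m + 1) → Fin (m + 1) → ℕ := fun i j =>
    if j = i then 0
    else spreadT m (D i) (if j.val < i.val then j.val else j.val - 1) with hM
  have hdiag : ∀ i, M i i = 0 := fun i => by simp [hM]
  have hidx : ∀ (i : Fin (m + 1)) (k : Fin m),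
      M i (i.succAbove k) = spreadT m (D i) k.val := by
    intro i k
    have hne : i.succAbove k ≠ i := Fin.succAbove_ne i k
    simp only [hM, if_neg hne]
    congr 1
    rcases lt_or_ge (Fin.castSucc k) i with h | h
    · rw [Fin.succAbove_of_castSucc_lt _ _ h]
      have : k.val < i.val := h
      simp [this]
    · rw [Fin.succAbove_of_le_castSucc _ _ h]
      have : ¬ (k.val + 1 < i.val) := by
        have : i.val ≤ k.val := h
        omega
      simp [Fin.val_succ, this]
  have hrow : ∀ i, ∑ j, M i j = D i := by
    intro i
    rw [Fin.sum_univ_succAbove (fun j => M i j) i, hdiag]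
    have : ∑ k : Fin m, M i (i.succAbove k) = ∑ k : Fin m, spreadT m (D i) k.val :=
      Finset.sum_congr rfl fun k _ => hidx i k
    rw [this, Fin.sum_univ_eq_sum_range (fun k => spreadT m (D i) k) m,
      spreadT_sum m (D i) hm]
    omega
  have hentry : ∀ i j, M i j ≤ c := by
    intro i j
    simp only [hM]
    split
    · exact Nat.zero_le _
    · calc spreadT m (D i) _ ≤ (D i + m - 1) / m := spreadT_le m (D i) _ hm
        _ ≤ c := Nat.div_le_div_right (by have := hDle i; omega)
  -- bound on the ceiling of S / B
  have hdmaxle : dmax ≤ m * c := ceil_div_mul_ge m dmax hm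
  have hS : ∑ i, D i ≤ (m + 1) * (m * c) := by
    calc ∑ i, D i ≤ ∑ _i : Fin (m + 1), dmax := Finset.sum_le_sum fun i _ => hDle i
      _ = (m + 1) * dmax := by simp [mul_comm]
      _ ≤ (m + 1) * (m * c) := Nat.mul_le_mul_left _ hdmaxle
  set B : ℕ := (m + 1) * ((m + 1) - 1) / 2 with hB
  have hB2 : 2 * B = (m + 1) * m := by
    have hdvd : 2 ∣ (m + 1) * m := by
      rw [mul_comm]; exact (Nat.even_mul_succ_self m).two_dvd
    simp only [hB, Nat.add_sub_cancel]
    omega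
  have hBpos : 1 ≤ B := by
    have h2 : 2 ≤ (m + 1) * m := by nlinarith
    omega
  have hceil : ((∑ i, D i) + B - 1) / B ≤ 2 * c := by
    have h0 : B * (2 * c) = (m + 1) * (m * c) := by
      rw [show B * (2 * c) = 2 * B * c by ring, hB2]; ring
    have h1 : (∑ i, D i) + B - 1 ≤ B * (2 * c) + (B - 1) := by omega
    calc ((∑ i, D i) + B - 1) / B ≤ (B * (2 * c) + (B - 1)) / B :=
          Nat.div_le_div_right h1
      _ = 2 * c + (B - 1) / B := by rw [Nat.mul_add_div (by omega)]
      _ = 2 * c := by rw [Nat.div_eq_of_lt (by omega)]; ring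
  have key : ∀ (h : m + 1 - 1 < m + 1),
      (D ⟨m + 1 - 1, h⟩ + (m + 1) - 2) / (m + 1 - 1) = c := by
    intro h
    have hval : (⟨m + 1 - 1, h⟩ : Fin (m + 1)) = ⟨m, by omega⟩ := by
      congr 1
    rw [hval]
    show (dmax + (m + 1) - 2) / (m + 1 - 1) = (dmax + m - 1) / m
    have e1 : dmax + (m + 1) - 2 = dmax + m - 1 := by omega
    rw [e1, Nat.add_sub_cancel]
  refine ⟨0, 2 * c, M, hdiag, hrow, ?_, ?_, ?_, Nat.zero_le _, Nat.zero_le _⟩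
  · intro i j _
    exact ⟨Nat.zero_le _, by have := hentry i j; have := hentry j i; omega⟩
  · rw [key]
    exact max_le hceil (by omega)
  · rw [key]
end

section
/- Let n ≥ 2 and let a ≤ b be nonnegative integers. A nondecreasing sequence D = (d_1, d_2, …, d_n) of nonnegative integers is the score sequence of some (a,b,n)-tournament if and only if for every k with 1 ≤ k ≤ n it holds that a·B_k ≤ S_k ≤ b·B_n − L_k − (n−k)·d_k, where B_k = k(k−1)/2, S_k = d_1 + ⋯ + d_k, and the integers L_k are defined by L_0 = 0 and L_k = max(L_{k−1}, b·B_k − S_k) for 1 ≤ k ≤ n. -/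
/-- `D` is the score sequence of some `(a,b,n)`-tournament. -/
def IsScoreSeqAB (n : ℕ) (a b : ℕ) (D : Fin n → ℕ) : Prop :=
  ∃ M : Fin n → Fin n → ℕ,
    (∀ i, M i i = 0) ∧
    (∀ i j, i ≠ j → a ≤ M i j + M j i ∧ M i j + M j i ≤ b) ∧
    (∀ i, ∑ j, M i j = D i)

/-- Partial sum `S_k = d_1 + ⋯ + d_k` (as an integer). -/
def Spart (n : ℕ) (D : Fin n → ℕ) (k : ℕ) : ℤ :=
  ∑ i : Fin n, if (i : ℕ) < k then (D i : ℤ) else 0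

/-- `B_k = k(k-1)/2` (as an integer). -/
def Bbin (k : ℕ) : ℤ := (k * (k - 1) / 2 : ℕ)

/-- The loss function: `L_0 = 0`, `L_k = max (L_{k-1}, b·B_k − S_k)`, computed in `ℤ`. -/
def Lloss (n : ℕ) (D : Fin n → ℕ) (b : ℕ) : ℕ → ℤ
  | 0 => 0
  | k + 1 => max (Lloss n D b k) ((b : ℤ) * Bbin (k + 1) - Spart n D (k + 1))

open Finset

namespace ScoreAux

variable {n : ℕ}

def rsum (M : Fin n → Fin n → ℕ) (i : Fin n) : ℕ := ∑ j, M i j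

def Valid (a b : ℕ) (M : Fin n → Fin n → ℕ) : Prop :=
  (∀ i, M i i = 0) ∧ ∀ i j, i ≠ j → a ≤ M i j + M j i ∧ M i j + M j i ≤ b

def Phi (D : Fin n → ℕ) (M : Fin n → Fin n → ℕ) : ℕ :=
  ∑ i, ((rsum M i - D i) + (D i - rsum M i))

lemma entry_le_rsum (M : Fin n → Fin n → ℕ) (i j : Fin n) : M i j ≤ rsum M i :=
  Finset.single_le_sum (fun _ _ => Nat.zero_le _) (mem_univ j)

lemma Phi_split (D : Fin n → ℕ) (M : Fin n → Fin n → ℕ) (x y : Fin n) (hxy : x ≠ y) :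
    Phi D M = ((rsum M x - D x) + (D x - rsum M x)) + ((rsum M y - D y) + (D y - rsum M y))
      + ∑ i ∈ (univ.erase x).erase y, ((rsum M i - D i) + (D i - rsum M i)) := by
  have hy : y ∈ univ.erase x := by simp [Finset.mem_erase, hxy.symm]
  rw [Phi, ← Finset.add_sum_erase _ _ (mem_univ x), ← Finset.add_sum_erase _ _ hy]
  ring

lemma Phi_change (D : Fin n → ℕ) (M M' : Fin n → Fin n → ℕ) (x y : Fin n) (hxy : x ≠ y)
    (hrest : ∀ i, i ≠ x → i ≠ y → rsum M' i = rsum M i) :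
    Phi D M' + ((rsum M x - D x) + (D x - rsum M x)) + ((rsum M y - D y) + (D y - rsum M y))
      = Phi D M + ((rsum M' x - D x) + (D x - rsum M' x))
        + ((rsum M' y - D y) + (D y - rsum M' y)) := by
  rw [Phi_split D M x y hxy, Phi_split D M' x y hxy]
  have : ∑ i ∈ (univ.erase x).erase y, ((rsum M' i - D i) + (D i - rsum M' i))
      = ∑ i ∈ (univ.erase x).erase y, ((rsum M i - D i) + (D i - rsum M i)) := by
    refine Finset.sum_congr rfl fun i hi => ?_
    have h1 : i ≠ y := (Finset.mem_erase.mp hi).1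
    have h2 : i ≠ x := (Finset.mem_erase.mp (Finset.mem_erase.mp hi).2).1
    rw [hrest i h2 h1]
  rw [this]
  ring

/-- move one point from `M y x` to `M x y` : row `x` gains a point, row `y` loses one. -/
def mv (M : Fin n → Fin n → ℕ) (x y : Fin n) : Fin n → Fin n → ℕ :=
  fun i j => if i = x ∧ j = y then M x y + 1 else if i = y ∧ j = x then M y x - 1 else M i j

section mv
variable (M : Fin n → Fin n → ℕ) (x y : Fin n)

lemma mv_diag (hxy : x ≠ y) (i : Fin n) : mv M x y i i = M i i := by
  unfold mv
  split_ifs with h1 h2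
  · exact absurd (h1.1.symm.trans h1.2) hxy
  · exact absurd (h2.1.symm.trans h2.2) hxy.symm
  · rfl

lemma mv_total (hxy : x ≠ y) (h1 : 1 ≤ M y x) (i j : Fin n) :
    mv M x y i j + mv M x y j i = M i j + M j i := by
  unfold mv
  by_cases hix : i = x <;> by_cases hjy : j = y <;> by_cases hiy : i = y <;>
    by_cases hjx : j = x <;> simp_all <;> omega

lemma mv_rsum_x (hxy : x ≠ y) : rsum (mv M x y) x = rsum M x + 1 := by
  unfold rsum
  have : ∀ j, mv M x y x j = M x j + (if j = y then 1 else 0) := by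
    intro j
    unfold mv
    split_ifs with h1 h2 h3 <;> simp_all
  rw [Finset.sum_congr rfl fun j _ => this j, Finset.sum_add_distrib]
  simp

lemma mv_rsum_y (hxy : x ≠ y) (h1 : 1 ≤ M y x) : rsum (mv M x y) y + 1 = rsum M y := by
  unfold rsum
  have : ∀ j, mv M x y y j + (if j = x then 1 else 0) = M y j := by
    intro j
    unfold mv
    split_ifs with ha hb hc <;> simp_all <;> omega
  calc (∑ j, mv M x y y j) + 1 = ∑ j, (mv M x y y j + (if j = x then 1 else 0)) := by
        rw [Finset.sum_add_distrib]; simp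
    _ = ∑ j, M y j := Finset.sum_congr rfl fun j _ => this j

lemma mv_rsum_other (i : Fin n) (hix : i ≠ x) (hiy : i ≠ y) : rsum (mv M x y) i = rsum M i := by
  unfold rsum
  refine Finset.sum_congr rfl fun j _ => ?_
  unfold mv
  split_ifs with h1 h2 <;> simp_all

lemma mv_valid {a b : ℕ} (hM : Valid a b M) (hxy : x ≠ y) (h1 : 1 ≤ M y x) :
    Valid a b (mv M x y) := by
  refine ⟨fun i => by rw [mv_diag M x y hxy]; exact hM.1 i, fun i j hij => ?_⟩
  rw [mv_total M x y hxy h1]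
  exact hM.2 i j hij

end mv

/-- add one point to `M x w`. -/
def ad (M : Fin n → Fin n → ℕ) (x w : Fin n) : Fin n → Fin n → ℕ :=
  fun i j => if i = x ∧ j = w then M x w + 1 else M i j

section ad
variable (M : Fin n → Fin n → ℕ) (x w : Fin n)

lemma ad_total (hxw : x ≠ w) (i j : Fin n) :
    mv M x w i j = mv M x w i j := rfl

lemma ad_rsum_x (hxw : x ≠ w) : rsum (ad M x w) x = rsum M x + 1 := by
  unfold rsum
  have : ∀ j, ad M x w x j = M x j + (if j = w then 1 else 0) := by
    intro j; unfold ad; split_ifs with h1 h2 <;> simp_all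
  rw [Finset.sum_congr rfl fun j _ => this j, Finset.sum_add_distrib]
  simp

lemma ad_rsum_other (i : Fin n) (hix : i ≠ x) : rsum (ad M x w) i = rsum M i := by
  unfold rsum
  refine Finset.sum_congr rfl fun j _ => ?_
  unfold ad
  split_ifs with h1 <;> simp_all

lemma ad_valid {a b : ℕ} (hM : Valid a b M) (hxw : x ≠ w) (hb : M x w + M w x < b) :
    Valid a b (ad M x w) := by
  constructor
  · intro i; unfold ad; split_ifs with h1
    · exact absurd (h1.1.symm.trans h1.2) hxw
    · exact hM.1 i
  · intro i j hij
    have base := hM.2 i j hij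
    unfold ad
    by_cases hix : i = x <;> by_cases hjw : j = w <;> by_cases hjx : j = x <;>
      by_cases hiw : i = w <;> simp_all <;> omega

end ad

/-- delete one point from `M x w`. -/
def dl (M : Fin n → Fin n → ℕ) (x w : Fin n) : Fin n → Fin n → ℕ :=
  fun i j => if i = x ∧ j = w then M x w - 1 else M i j

section dl
variable (M : Fin n → Fin n → ℕ) (x w : Fin n)

lemma dl_rsum_x (hxw : x ≠ w) (h1 : 1 ≤ M x w) : rsum (dl M x w) x + 1 = rsum M x := by
  unfold rsum
  have : ∀ j, dl M x w x j + (if j = w then 1 else 0) = M x j := by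
    intro j; unfold dl; split_ifs with h1' <;> simp_all <;> omega
  calc (∑ j, dl M x w x j) + 1 = ∑ j, (dl M x w x j + (if j = w then 1 else 0)) := by
        rw [Finset.sum_add_distrib]; simp
    _ = ∑ j, M x j := Finset.sum_congr rfl fun j _ => this j

lemma dl_rsum_other (i : Fin n) (hix : i ≠ x) : rsum (dl M x w) i = rsum M i := by
  unfold rsum
  refine Finset.sum_congr rfl fun j _ => ?_
  unfold dl
  split_ifs with h1 <;> simp_all

lemma dl_valid {a b : ℕ} (hM : Valid a b M) (hxw : x ≠ w) (ha : a < M x w + M w x) :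
    Valid a b (dl M x w) := by
  constructor
  · intro i; unfold dl; split_ifs with h1
    · exact absurd (h1.1.symm.trans h1.2) hxw
    · exact hM.1 i
  · intro i j hij
    have base := hM.2 i j hij
    unfold dl
    by_cases hix : i = x <;> by_cases hjw : j = w <;> by_cases hjx : j = x <;>
      by_cases hiw : i = w <;> simp_all <;> omega

end dl

lemma chain_congr {α : Type*} {R S : α → α → Prop} :
    ∀ {l : List α} {x : α}, List.Chain R x l →
      (∀ p q, p ∈ x :: l → q ∈ l → R p q → S p q) → List.Chain S x l := by
  intro l
  induction l with
  | nil => intro x _ _; exact List.Chain.nil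
  | cons u t ih =>
    intro x hc h
    simp only [List.Chain, List.isChain_cons_cons] at hc ⊢
    refine ⟨h x u (by simp) (by simp) hc.1, ih hc.2 fun p q hp hq hr => ?_⟩
    exact h p q (by simp at hp ⊢; tauto) (by simp [hq]) hr

lemma aug_deficit (a b : ℕ) (D : Fin n → ℕ) :
    ∀ N : ℕ, ∀ l : List (Fin n), l.length < N → ∀ M : Fin n → Fin n → ℕ, Valid a b M →
      ∀ s v : Fin n,
      List.Chain (fun x y => 1 ≤ M y x) s l →
      (s :: l).getLast? = some v →
      rsum M s < D s →
      (D v < rsum M v ∨ ∃ w, w ≠ v ∧ M v w + M w v < b) →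
      ∃ M', Valid a b M' ∧ Phi D M' < Phi D M := by
  intro N
  induction N with
  | zero => intro l hl; omega
  | succ N ih =>
    intro l hl M hM s v hchain hlast hs hv
    cases l with
    | nil =>
      have hvs : v = s := by
        have : some s = some v := by simpa using hlast
        exact (Option.some.inj this).symm
      subst hvs
      rcases hv with hsur | ⟨w, hwv, hwb⟩
      · omega
      · refine ⟨ad M v w, ad_valid M v w hM (Ne.symm hwv) hwb, ?_⟩
        have h1 := Phi_change D M (ad M v w) v w (Ne.symm hwv)
          (fun i hi _ => ad_rsum_other M v w i hi)
        have h2 : rsum (ad M v w) v = rsum M v + 1 := ad_rsum_x M v w (Ne.symm hwv)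
        have h3 : rsum (ad M v w) w = rsum M w := ad_rsum_other M v w w hwv
        omega
    | cons u t =>
      by_cases hmem : s ∈ u :: t
      · obtain ⟨l₁, l₂, hdec⟩ := List.append_of_mem hmem
        have hchain2 : List.Chain (fun x y => 1 ≤ M y x) s l₂ :=
          (List.isChain_cons_split.mp (show List.IsChain _ (s :: (l₁ ++ s :: l₂)) from hdec ▸ hchain)).2
        have hlast2 : (s :: l₂).getLast? = some v := by
          have he : s :: (u :: t) = (s :: l₁) ++ (s :: l₂) := by rw [hdec]; rfl
          have hne : s :: l₂ ≠ [] := List.cons_ne_nil _ _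
          have hg : (s :: l₂).getLast? = some ((s :: l₂).getLast hne) :=
            List.getLast?_eq_getLast_of_ne_nil hne
          rw [he, List.getLast?_append, hg] at hlast
          simp only [Option.some_or] at hlast
          rw [hg, hlast]
        have hlen : l₂.length < N := by
          have := congrArg List.length hdec
          simp at this hl
          omega
        exact ih l₂ hlen M hM s v hchain2 hlast2 hs hv
      · have hedge : 1 ≤ M u s := (List.chain_cons.mp hchain).1
        have hsu : s ≠ u := fun h => hmem (by rw [h]; exact List.mem_cons_self)
        have hM₁ : Valid a b (mv M s u) := mv_valid M s u hM hsu hedge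
        have hrx : rsum (mv M s u) s = rsum M s + 1 := mv_rsum_x M s u hsu
        have hry : rsum (mv M s u) u + 1 = rsum M u := mv_rsum_y M s u hsu hedge
        have hro : ∀ i, i ≠ s → i ≠ u → rsum (mv M s u) i = rsum M i :=
          fun i h1 h2 => mv_rsum_other M s u i h1 h2
        have hPC := Phi_change D M (mv M s u) s u hsu hro
        by_cases hu : D u < rsum M u
        · exact ⟨mv M s u, hM₁, by omega⟩
        · have hent := entry_le_rsum M u s
          have hPhiEq : Phi D (mv M s u) = Phi D M := by omega
          have hchain' : List.Chain (fun x y => 1 ≤ (mv M s u) y x) u t := by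
            refine chain_congr (List.chain_cons.mp hchain).2 fun p q hp hq hr => ?_
            have hps : p ≠ s := fun h => hmem (h ▸ hp)
            have hqs : q ≠ s := fun h => hmem (h ▸ List.mem_cons_of_mem u hq)
            have heq : mv M s u q p = M q p := by
              unfold mv
              split_ifs with h1 h2
              · exact absurd h1.1 hqs
              · exact absurd h2.2 fun hh => hps hh
              · rfl
            rw [heq]; exact hr
          have hlast' : (u :: t).getLast? = some v := by
            rw [List.getLast?_cons_cons] at hlast; exact hlast
          have hvmem : v ∈ u :: t := by
            obtain ⟨hne, he⟩ := List.mem_getLast?_eq_getLast (l := u :: t) (x := v)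
              (by rw [hlast']; rfl)
            rw [he]; exact List.getLast_mem hne
          have hvs : v ≠ s := fun h => hmem (h ▸ hvmem)
          have hv' : D v < rsum (mv M s u) v ∨
              ∃ w, w ≠ v ∧ (mv M s u) v w + (mv M s u) w v < b := by
            rcases hv with hsur | ⟨w, hwv, hwb⟩
            · left
              have hvu : v ≠ u := fun h => hu (h ▸ hsur)
              rw [hro v hvs hvu]; exact hsur
            · exact Or.inr ⟨w, hwv, by rw [mv_total M s u hsu hedge v w]; exact hwb⟩
          have hs' : rsum (mv M s u) u < D u := by omega
          obtain ⟨M', hM', hlt⟩ := ih t (by simp at hl ⊢; omega) (mv M s u) hM₁ u v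
            hchain' hlast' hs' hv'
          exact ⟨M', hM', by omega⟩

lemma aug_surplus (a b : ℕ) (D : Fin n → ℕ) :
    ∀ N : ℕ, ∀ l : List (Fin n), l.length < N → ∀ M : Fin n → Fin n → ℕ, Valid a b M →
      ∀ s v : Fin n,
      List.Chain (fun x y => 1 ≤ M x y) s l →
      (s :: l).getLast? = some v →
      D s < rsum M s →
      (rsum M v < D v ∨ ∃ w, w ≠ v ∧ 1 ≤ M v w ∧ a < M v w + M w v) →
      ∃ M', Valid a b M' ∧ Phi D M' < Phi D M := by
  intro N
  induction N with
  | zero => intro l hl; omega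
  | succ N ih =>
    intro l hl M hM s v hchain hlast hs hv
    cases l with
    | nil =>
      have hvs : v = s := by
        have : some s = some v := by simpa using hlast
        exact (Option.some.inj this).symm
      subst hvs
      rcases hv with hdef | ⟨w, hwv, h1w, hwa⟩
      · omega
      · refine ⟨dl M v w, dl_valid M v w hM (Ne.symm hwv) hwa, ?_⟩
        have h1 := Phi_change D M (dl M v w) v w (Ne.symm hwv)
          (fun i hi _ => dl_rsum_other M v w i hi)
        have h2 : rsum (dl M v w) v + 1 = rsum M v := dl_rsum_x M v w (Ne.symm hwv) h1w
        have h3 : rsum (dl M v w) w = rsum M w := dl_rsum_other M v w w hwv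
        omega
    | cons u t =>
      by_cases hmem : s ∈ u :: t
      · obtain ⟨l₁, l₂, hdec⟩ := List.append_of_mem hmem
        have hchain2 : List.Chain (fun x y => 1 ≤ M x y) s l₂ :=
          (List.isChain_cons_split.mp (show List.IsChain _ (s :: (l₁ ++ s :: l₂)) from hdec ▸ hchain)).2
        have hlast2 : (s :: l₂).getLast? = some v := by
          have he : s :: (u :: t) = (s :: l₁) ++ (s :: l₂) := by rw [hdec]; rfl
          have hne : s :: l₂ ≠ [] := List.cons_ne_nil _ _
          have hg : (s :: l₂).getLast? = some ((s :: l₂).getLast hne) :=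
            List.getLast?_eq_getLast_of_ne_nil hne
          rw [he, List.getLast?_append, hg] at hlast
          simp only [Option.some_or] at hlast
          rw [hg, hlast]
        have hlen : l₂.length < N := by
          have := congrArg List.length hdec
          simp at this hl
          omega
        exact ih l₂ hlen M hM s v hchain2 hlast2 hs hv
      · have hedge : 1 ≤ M s u := (List.chain_cons.mp hchain).1
        have hsu : s ≠ u := fun h => hmem (by rw [h]; exact List.mem_cons_self)
        have hM₁ : Valid a b (mv M u s) := mv_valid M u s hM (Ne.symm hsu) hedge
        have hrx : rsum (mv M u s) u = rsum M u + 1 := mv_rsum_x M u s (Ne.symm hsu)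
        have hry : rsum (mv M u s) s + 1 = rsum M s := mv_rsum_y M u s (Ne.symm hsu) hedge
        have hro : ∀ i, i ≠ u → i ≠ s → rsum (mv M u s) i = rsum M i :=
          fun i h1 h2 => mv_rsum_other M u s i h1 h2
        have hPC := Phi_change D M (mv M u s) u s (Ne.symm hsu)
          (fun i h1 h2 => hro i h1 h2)
        by_cases hu : rsum M u < D u
        · exact ⟨mv M u s, hM₁, by omega⟩
        · have hent := entry_le_rsum M s u
          have hPhiEq : Phi D (mv M u s) = Phi D M := by omega
          have hchain' : List.Chain (fun x y => 1 ≤ (mv M u s) x y) u t := by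
            refine chain_congr (List.chain_cons.mp hchain).2 fun p q hp hq hr => ?_
            have hps : p ≠ s := fun h => hmem (h ▸ hp)
            have hqs : q ≠ s := fun h => hmem (h ▸ List.mem_cons_of_mem u hq)
            have heq : mv M u s p q = M p q := by
              unfold mv
              split_ifs with h1 h2
              · exact absurd h1.2 hqs
              · exact absurd h2.1 hps
              · rfl
            rw [heq]; exact hr
          have hlast' : (u :: t).getLast? = some v := by
            rw [List.getLast?_cons_cons] at hlast; exact hlast
          have hvmem : v ∈ u :: t := by
            obtain ⟨hne, he⟩ := List.mem_getLast?_eq_getLast (l := u :: t) (x := v)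
              (by rw [hlast']; rfl)
            rw [he]; exact List.getLast_mem hne
          have hvs : v ≠ s := fun h => hmem (h ▸ hvmem)
          have hv' : rsum (mv M u s) v < D v ∨
              ∃ w, w ≠ v ∧ 1 ≤ (mv M u s) v w ∧ a < (mv M u s) v w + (mv M u s) w v := by
            rcases hv with hdef | ⟨w, hwv, h1w, hwa⟩
            · left
              have hvu : v ≠ u := fun h => hu (h ▸ hdef)
              rw [hro v hvu hvs]; exact hdef
            · refine Or.inr ⟨w, hwv, ?_, by rw [mv_total M u s (Ne.symm hsu) hedge v w]; exact hwa⟩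
              have : 1 ≤ mv M u s v w := by
                unfold mv
                split_ifs with h1 h2
                · omega
                · exact absurd h2.1 hvs
                · exact h1w
              exact this
          have hs' : D u < rsum (mv M u s) u := by omega
          obtain ⟨M', hM', hlt⟩ := ih t (by simp at hl ⊢; omega) (mv M u s) hM₁ u v
            hchain' hlast' hs' hv'
          exact ⟨M', hM', by omega⟩

def Spre (D : Fin n → ℕ) (k : ℕ) : ℕ := ∑ i ∈ univ.filter (fun i : Fin n => (i : ℕ) < k), D i

lemma card_filter_lt (k : ℕ) (hk : k ≤ n) :
    (univ.filter (fun i : Fin n => (i : ℕ) < k)).card = k := by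
  induction k with
  | zero => simp
  | succ k ihk =>
    have hk' : k ≤ n := by omega
    have hkn : k < n := by omega
    have : univ.filter (fun i : Fin n => (i : ℕ) < k + 1)
        = insert (⟨k, hkn⟩ : Fin n) (univ.filter (fun i : Fin n => (i : ℕ) < k)) := by
      ext i
      simp only [Finset.mem_filter, Finset.mem_insert, Finset.mem_univ, true_and]
      constructor
      · intro h
        by_cases hik : (i : ℕ) = k
        · exact Or.inl (Fin.ext hik)
        · exact Or.inr (by omega)
      · rintro (rfl | h)
        · simp
        · omega
    rw [this, Finset.card_insert_of_notMem (by simp), ihk hk']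

lemma Spre_split (D : Fin n → ℕ) (j : ℕ) :
    Spre D j + ∑ i ∈ univ.filter (fun i : Fin n => ¬ ((i : ℕ) < j)), D i = Spre D n := by
  unfold Spre
  rw [show univ.filter (fun i : Fin n => (i : ℕ) < n) = univ from
    Finset.filter_true_of_mem (fun i _ => i.isLt)]
  exact Finset.sum_filter_add_sum_filter_not univ _ D

lemma sum_rsum_split (M : Fin n → Fin n → ℕ) (s : Finset (Fin n)) :
    ∑ i ∈ s, rsum M i = ∑ i ∈ s, ∑ j ∈ s, M i j + ∑ i ∈ s, ∑ j ∈ sᶜ, M i j := by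
  unfold rsum
  rw [← Finset.sum_add_distrib]
  exact Finset.sum_congr rfl fun i _ => (Finset.sum_add_sum_compl s fun j => M i j).symm

lemma double_internal (M : Fin n → Fin n → ℕ) (hdiag : ∀ i, M i i = 0) (s : Finset (Fin n)) :
    2 * (∑ i ∈ s, ∑ j ∈ s, M i j) = ∑ i ∈ s, ∑ j ∈ s.erase i, (M i j + M j i) := by
  have h1 : ∑ i ∈ s, ∑ j ∈ s, M i j = ∑ i ∈ s, ∑ j ∈ s.erase i, M i j :=
    Finset.sum_congr rfl fun i hi => by
      rw [← Finset.add_sum_erase s _ hi, hdiag i, zero_add]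
  have h2 : ∑ i ∈ s, ∑ j ∈ s, M j i = ∑ i ∈ s, ∑ j ∈ s.erase i, M j i :=
    Finset.sum_congr rfl fun i hi => by
      rw [← Finset.add_sum_erase s _ hi, hdiag i, zero_add]
  have hcomm : (∑ i ∈ s, ∑ j ∈ s, M i j) = ∑ i ∈ s, ∑ j ∈ s, M j i := Finset.sum_comm
  calc 2 * (∑ i ∈ s, ∑ j ∈ s, M i j)
      = (∑ i ∈ s, ∑ j ∈ s, M i j) + (∑ i ∈ s, ∑ j ∈ s, M j i) := by rw [← hcomm]; ring
    _ = (∑ i ∈ s, ∑ j ∈ s.erase i, M i j) + (∑ i ∈ s, ∑ j ∈ s.erase i, M j i) := by rw [h1, h2]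
    _ = ∑ i ∈ s, ∑ j ∈ s.erase i, (M i j + M j i) := by
        rw [← Finset.sum_add_distrib]
        exact Finset.sum_congr rfl fun i _ => (Finset.sum_add_distrib).symm

lemma sum_le_top {D : Fin n → ℕ} (hD : Monotone D) (s : Finset (Fin n)) :
    ∑ i ∈ s, D i + Spre D (n - s.card) ≤ Spre D n := by
  classical
  by_cases hs : s = ∅
  · subst hs; simp
  have hm1 : 1 ≤ s.card := Finset.card_pos.mpr (Finset.nonempty_of_ne_empty hs)
  have hmn : s.card ≤ n := by
    have := Finset.card_le_univ s
    simpa using this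
  set m := s.card with hm
  set T : Finset (Fin n) := univ.filter (fun i : Fin n => ¬ ((i : ℕ) < n - m)) with hT
  have hsplit : Spre D (n - m) + ∑ i ∈ T, D i = Spre D n := Spre_split D (n - m)
  have hcardT : T.card = m := by
    have h1 : T = univ \ univ.filter (fun i : Fin n => (i : ℕ) < n - m) := by
      rw [hT, Finset.filter_not]
    rw [h1, Finset.card_sdiff_of_subset (Finset.filter_subset _ _),
      card_filter_lt (n - m) (by omega)]
    simp
    omega
  suffices h : ∑ i ∈ s, D i ≤ ∑ i ∈ T, D i by omega
  have hsub1 : ∑ i ∈ s ∩ T, D i + ∑ i ∈ s \ T, D i = ∑ i ∈ s, D i :=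
    Finset.sum_inter_add_sum_sdiff s T D
  have hsub2 : ∑ i ∈ T ∩ s, D i + ∑ i ∈ T \ s, D i = ∑ i ∈ T, D i :=
    Finset.sum_inter_add_sum_sdiff T s D
  have hseq : ∑ i ∈ s ∩ T, D i = ∑ i ∈ T ∩ s, D i := by rw [Finset.inter_comm]
  have hcards : (s \ T).card = (T \ s).card := by
    have h1 : (s \ T).card + (s ∩ T).card = m := Finset.card_sdiff_add_card_inter s T
    have h2 : (T \ s).card + (T ∩ s).card = m := by
      rw [← hcardT]; exact Finset.card_sdiff_add_card_inter T s
    have h3 : (s ∩ T).card = (T ∩ s).card := by rw [Finset.inter_comm]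
    omega
  have hpiv : n - m < n := by omega
  set piv : Fin n := ⟨n - m, hpiv⟩ with hpivdef
  have hub : ∀ i ∈ s \ T, D i ≤ D piv := by
    intro i hi
    have h2 := (Finset.mem_sdiff.mp hi).2
    simp only [hT, Finset.mem_filter, Finset.mem_univ, true_and, not_not] at h2
    exact hD (by simp only [Fin.le_def, hpivdef]; omega)
  have hlb : ∀ i ∈ T \ s, D piv ≤ D i := by
    intro i hi
    have h2 := (Finset.mem_sdiff.mp hi).1
    simp only [hT, Finset.mem_filter, Finset.mem_univ, true_and] at h2
    exact hD (by simp only [Fin.le_def, hpivdef]; omega)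
  have h5 : ∑ i ∈ s \ T, D i ≤ (s \ T).card * D piv := by
    simpa [smul_eq_mul] using Finset.sum_le_card_nsmul (s \ T) D (D piv) hub
  have h6 : (T \ s).card * D piv ≤ ∑ i ∈ T \ s, D i := by
    simpa [smul_eq_mul] using Finset.card_nsmul_le_sum (T \ s) D (D piv) hlb
  have h7 : ∑ i ∈ s \ T, D i ≤ ∑ i ∈ T \ s, D i := by
    rw [hcards] at h5; exact h5.trans h6
  omega

lemma bot_le_sum {D : Fin n → ℕ} (hD : Monotone D) (s : Finset (Fin n)) :
    Spre D s.card ≤ ∑ i ∈ s, D i := by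
  classical
  by_cases hs : s = ∅
  · subst hs; simp [Spre]
  have hm1 : 1 ≤ s.card := Finset.card_pos.mpr (Finset.nonempty_of_ne_empty hs)
  have hmn : s.card ≤ n := by
    have := Finset.card_le_univ s
    simpa using this
  set m := s.card with hm
  set B : Finset (Fin n) := univ.filter (fun i : Fin n => (i : ℕ) < m) with hB
  have hcardB : B.card = m := card_filter_lt m hmn
  show ∑ i ∈ B, D i ≤ ∑ i ∈ s, D i
  have hsub1 : ∑ i ∈ B ∩ s, D i + ∑ i ∈ B \ s, D i = ∑ i ∈ B, D i :=
    Finset.sum_inter_add_sum_sdiff B s D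
  have hsub2 : ∑ i ∈ s ∩ B, D i + ∑ i ∈ s \ B, D i = ∑ i ∈ s, D i :=
    Finset.sum_inter_add_sum_sdiff s B D
  have hseq : ∑ i ∈ B ∩ s, D i = ∑ i ∈ s ∩ B, D i := by rw [Finset.inter_comm]
  have hcards : (B \ s).card = (s \ B).card := by
    have h1 : (B \ s).card + (B ∩ s).card = m := by
      rw [← hcardB]; exact Finset.card_sdiff_add_card_inter B s
    have h2 : (s \ B).card + (s ∩ B).card = m := Finset.card_sdiff_add_card_inter s B
    have h3 : (B ∩ s).card = (s ∩ B).card := by rw [Finset.inter_comm]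
    omega
  have hpiv : m - 1 < n := by omega
  set piv : Fin n := ⟨m - 1, hpiv⟩ with hpivdef
  have hub : ∀ i ∈ B \ s, D i ≤ D piv := by
    intro i hi
    have h2 := (Finset.mem_sdiff.mp hi).1
    simp only [hB, Finset.mem_filter, Finset.mem_univ, true_and] at h2
    exact hD (by simp only [Fin.le_def, hpivdef]; omega)
  have hlb : ∀ i ∈ s \ B, D piv ≤ D i := by
    intro i hi
    have h2 := (Finset.mem_sdiff.mp hi).2
    simp only [hB, Finset.mem_filter, Finset.mem_univ, true_and, not_lt] at h2
    exact hD (by simp only [Fin.le_def, hpivdef]; omega)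
  have h5 : ∑ i ∈ B \ s, D i ≤ (B \ s).card * D piv := by
    simpa [smul_eq_mul] using Finset.sum_le_card_nsmul (B \ s) D (D piv) hub
  have h6 : (s \ B).card * D piv ≤ ∑ i ∈ s \ B, D i := by
    simpa [smul_eq_mul] using Finset.card_nsmul_le_sum (s \ B) D (D piv) hlb
  have h7 : ∑ i ∈ B \ s, D i ≤ ∑ i ∈ s \ B, D i := by
    rw [hcards] at h5; exact h5.trans h6
  omega

lemma step (a b : ℕ) (D : Fin n → ℕ) (hn : 1 ≤ n)
    (H1 : ∀ k, k ≤ n → a * (k * (k - 1)) ≤ 2 * Spre D k)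
    (H2 : ∀ j, j ≤ n → 2 * Spre D n ≤ 2 * Spre D j + b * ((n - j) * (n + j - 1)))
    (hD : Monotone D)
    (M : Fin n → Fin n → ℕ) (hM : Valid a b M) (hPhi : Phi D M ≠ 0) :
    ∃ M', Valid a b M' ∧ Phi D M' < Phi D M := by
  classical
  by_cases hdef : ∃ i, rsum M i < D i
  · obtain ⟨i₀, hi₀⟩ := hdef
    by_cases hterm : ∃ v, Relation.ReflTransGen (fun x y => 1 ≤ M y x) i₀ v ∧
        (D v < rsum M v ∨ ∃ w, w ≠ v ∧ M v w + M w v < b)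
    · obtain ⟨v, hPv, hcond⟩ := hterm
      obtain ⟨l, hchain, hlast⟩ := List.exists_isChain_cons_of_relationReflTransGen hPv
      have hlast? : (i₀ :: l).getLast? = some v := by
        rw [List.getLast?_eq_getLast_of_ne_nil (List.cons_ne_nil _ _), hlast]
      exact aug_deficit a b D (l.length + 1) l (Nat.lt_succ_self _) M hM i₀ v hchain
        hlast? hi₀ hcond
    · exfalso
      push_neg at hterm
      set R : Finset (Fin n) :=
        univ.filter (fun v => Relation.ReflTransGen (fun x y => 1 ≤ M y x) i₀ v) with hR
      have hmemR : ∀ v, v ∈ R ↔ Relation.ReflTransGen (fun x y => 1 ≤ M y x) i₀ v := by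
        intro v; simp [hR]
      have hi₀R : i₀ ∈ R := (hmemR i₀).mpr Relation.ReflTransGen.refl
      have hcl : ∀ v ∈ R, ∀ w, 1 ≤ M w v → w ∈ R := by
        intro v hv w hw
        exact (hmemR w).mpr (Relation.ReflTransGen.tail ((hmemR v).mp hv) hw)
      have hle : ∀ v ∈ R, rsum M v ≤ D v := by
        intro v hv
        have := (hterm v ((hmemR v).mp hv)).1
        omega
      have hfull : ∀ v ∈ R, ∀ w, w ≠ v → M v w + M w v = b := by
        intro v hv w hw
        have h1 := (hterm v ((hmemR v).mp hv)).2 w hw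
        have h2 := (hM.2 v w (Ne.symm hw)).2
        omega
      set m := R.card with hmdef
      have hm1 : 1 ≤ m := Finset.card_pos.mpr ⟨i₀, hi₀R⟩
      have hmn : m ≤ n := by
        have := Finset.card_le_univ R
        simpa using this
      have hcross : ∀ v ∈ R, ∀ j ∈ Rᶜ, M v j = b := by
        intro v hv j hj
        have hjR : j ∉ R := Finset.mem_compl.mp hj
        have hjv : j ≠ v := fun h => hjR (h ▸ hv)
        have hzero : M j v = 0 := by
          by_contra h
          exact hjR (hcl v hv j (Nat.pos_of_ne_zero h))
        have := hfull v hv j hjv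
        omega
      have hint : 2 * ∑ i ∈ R, ∑ j ∈ R, M i j = m * ((m - 1) * b) := by
        rw [double_internal M hM.1 R]
        have : ∀ i ∈ R, ∑ j ∈ R.erase i, (M i j + M j i) = (m - 1) * b := by
          intro i hi
          rw [Finset.sum_congr rfl fun j hj =>
            hfull i hi j (Finset.ne_of_mem_erase hj)]
          rw [Finset.sum_const, Finset.card_erase_of_mem hi, smul_eq_mul]
        rw [Finset.sum_congr rfl this, Finset.sum_const, smul_eq_mul]
      have hcrs : ∑ i ∈ R, ∑ j ∈ Rᶜ, M i j = m * ((n - m) * b) := by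
        have : ∀ i ∈ R, ∑ j ∈ Rᶜ, M i j = (n - m) * b := by
          intro i hi
          rw [Finset.sum_congr rfl fun j hj => hcross i hi j hj]
          rw [Finset.sum_const, Finset.card_compl, smul_eq_mul]
          simp [hmdef]
        rw [Finset.sum_congr rfl this, Finset.sum_const, smul_eq_mul]
      have hA2 : 2 * ∑ v ∈ R, rsum M v = m * ((m - 1) * b) + 2 * (m * ((n - m) * b)) := by
        rw [sum_rsum_split M R]
        omega
      have hsumlt : ∑ v ∈ R, rsum M v < ∑ v ∈ R, D v :=
        Finset.sum_lt_sum hle ⟨i₀, hi₀R, hi₀⟩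
      have htop : ∑ v ∈ R, D v + Spre D (n - m) ≤ Spre D n := sum_le_top hD R
      have hH2 := H2 (n - m) (by omega)
      have hkey : b * ((n - (n - m)) * (n + (n - m) - 1))
          = m * ((m - 1) * b) + 2 * (m * ((n - m) * b)) := by
        have h1 : n - (n - m) = m := by omega
        have h2 : n + (n - m) - 1 = (m - 1) + 2 * (n - m) := by omega
        rw [h1, h2]; ring
      rw [hkey] at hH2
      omega
  · push_neg at hdef
    have hex : ∃ i, D i < rsum M i := by
      by_contra h
      push_neg at h
      exact hPhi (Finset.sum_eq_zero fun i _ => by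
        have h1 := hdef i
        have h2 := h i
        omega)
    obtain ⟨i₀, hi₀⟩ := hex
    by_cases hterm : ∃ v, Relation.ReflTransGen (fun x y => 1 ≤ M x y) i₀ v ∧
        (rsum M v < D v ∨ ∃ w, w ≠ v ∧ 1 ≤ M v w ∧ a < M v w + M w v)
    · obtain ⟨v, hPv, hcond⟩ := hterm
      obtain ⟨l, hchain, hlast⟩ := List.exists_isChain_cons_of_relationReflTransGen hPv
      have hlast? : (i₀ :: l).getLast? = some v := by
        rw [List.getLast?_eq_getLast_of_ne_nil (List.cons_ne_nil _ _), hlast]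
      exact aug_surplus a b D (l.length + 1) l (Nat.lt_succ_self _) M hM i₀ v hchain
        hlast? hi₀ hcond
    · exfalso
      push_neg at hterm
      set R : Finset (Fin n) :=
        univ.filter (fun v => Relation.ReflTransGen (fun x y => 1 ≤ M x y) i₀ v) with hR
      have hmemR : ∀ v, v ∈ R ↔ Relation.ReflTransGen (fun x y => 1 ≤ M x y) i₀ v := by
        intro v; simp [hR]
      have hi₀R : i₀ ∈ R := (hmemR i₀).mpr Relation.ReflTransGen.refl
      have hcl : ∀ v ∈ R, ∀ w, 1 ≤ M v w → w ∈ R := by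
        intro v hv w hw
        exact (hmemR w).mpr (Relation.ReflTransGen.tail ((hmemR v).mp hv) hw)
      have hsmall : ∀ v ∈ R, ∀ w ∈ R, w ≠ v → M v w + M w v ≤ a := by
        intro v hv w hwR hw
        by_cases h1 : 1 ≤ M v w
        · have := (hterm v ((hmemR v).mp hv)).2 w hw h1
          omega
        · by_cases h2 : 1 ≤ M w v
          · have := (hterm w ((hmemR w).mp hwR)).2 v (Ne.symm hw) h2
            omega
          · omega
      set m := R.card with hmdef
      have hm1 : 1 ≤ m := Finset.card_pos.mpr ⟨i₀, hi₀R⟩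
      have hmn : m ≤ n := by
        have := Finset.card_le_univ R
        simpa using this
      have hcross : ∀ v ∈ R, ∀ j ∈ Rᶜ, M v j = 0 := by
        intro v hv j hj
        by_contra h
        exact (Finset.mem_compl.mp hj) (hcl v hv j (Nat.pos_of_ne_zero h))
      have hcrs : ∑ i ∈ R, ∑ j ∈ Rᶜ, M i j = 0 :=
        Finset.sum_eq_zero fun i hi => Finset.sum_eq_zero fun j hj => hcross i hi j hj
      have hint : 2 * ∑ i ∈ R, ∑ j ∈ R, M i j ≤ m * ((m - 1) * a) := by
        rw [double_internal M hM.1 R]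
        calc ∑ i ∈ R, ∑ j ∈ R.erase i, (M i j + M j i)
            ≤ ∑ i ∈ R, ∑ _j ∈ R.erase i, a := by
              refine Finset.sum_le_sum fun i hi => Finset.sum_le_sum fun j hj => ?_
              exact hsmall i hi j (Finset.mem_of_mem_erase hj) (Finset.ne_of_mem_erase hj)
          _ = m * ((m - 1) * a) := by
              rw [Finset.sum_congr rfl fun i hi => by
                rw [Finset.sum_const, Finset.card_erase_of_mem hi, smul_eq_mul]]
              rw [Finset.sum_const, smul_eq_mul]
      have hA2 : 2 * ∑ v ∈ R, rsum M v ≤ m * ((m - 1) * a) := by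
        rw [sum_rsum_split M R, hcrs]
        omega
      have hsumlt : ∑ v ∈ R, D v < ∑ v ∈ R, rsum M v :=
        Finset.sum_lt_sum (fun v _ => hdef v) ⟨i₀, hi₀R, hi₀⟩
      have hbot : Spre D m ≤ ∑ v ∈ R, D v := bot_le_sum hD R
      have hH1 := H1 m hmn
      have hkey : a * (m * (m - 1)) = m * ((m - 1) * a) := by ring
      rw [hkey] at hH1
      omega

lemma suffic (a b : ℕ) (hab : a ≤ b) (D : Fin n → ℕ) (hn : 1 ≤ n) (hD : Monotone D)
    (H1 : ∀ k, k ≤ n → a * (k * (k - 1)) ≤ 2 * Spre D k)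
    (H2 : ∀ j, j ≤ n → 2 * Spre D n ≤ 2 * Spre D j + b * ((n - j) * (n + j - 1))) :
    ∃ M, Valid a b M ∧ ∀ i, rsum M i = D i := by
  have hstart : Valid a b (fun i j : Fin n => if (i : ℕ) < (j : ℕ) then a else 0) := by
    constructor
    · intro i; simp
    · intro i j hij
      have hne : (i : ℕ) ≠ (j : ℕ) := fun h => hij (Fin.ext h)
      rcases Nat.lt_trichotomy (i : ℕ) (j : ℕ) with h | h | h
      · simp [h, Nat.lt_asymm h]; omega
      · exact absurd h hne
      · simp [h, Nat.lt_asymm h]; omega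
  have main : ∀ c, ∀ M, Valid a b M → Phi D M ≤ c → ∃ M', Valid a b M' ∧ Phi D M' = 0 := by
    intro c
    induction c with
    | zero => exact fun M hM h => ⟨M, hM, Nat.le_zero.mp h⟩
    | succ c ihc =>
      intro M hM h
      by_cases h0 : Phi D M = 0
      · exact ⟨M, hM, h0⟩
      · obtain ⟨M', hM', hlt⟩ := step a b D hn H1 H2 hD M hM h0
        exact ihc M' hM' (by omega)
  obtain ⟨M, hM, h0⟩ := main (Phi D (fun i j : Fin n => if (i : ℕ) < (j : ℕ) then a else 0)) _
    hstart le_rfl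
  refine ⟨M, hM, fun i => ?_⟩
  have := (Finset.sum_eq_zero_iff.mp h0) i (mem_univ i)
  omega

lemma necc1 (a b : ℕ) (D : Fin n → ℕ) (M : Fin n → Fin n → ℕ) (hM : Valid a b M)
    (hrow : ∀ i, rsum M i = D i) :
    ∀ k, k ≤ n → a * (k * (k - 1)) ≤ 2 * Spre D k := by
  intro k hk
  set s := univ.filter (fun i : Fin n => (i : ℕ) < k) with hs
  have hcard : s.card = k := card_filter_lt k hk
  have h1 : ∑ i ∈ s, ∑ j ∈ s, M i j ≤ Spre D k := by
    refine Finset.sum_le_sum fun i _ => ?_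
    rw [← hrow i]
    exact Finset.sum_le_sum_of_subset (Finset.subset_univ s)
  have h2 : ∑ i ∈ s, ∑ _j ∈ s.erase i, a ≤ ∑ i ∈ s, ∑ j ∈ s.erase i, (M i j + M j i) := by
    refine Finset.sum_le_sum fun i hi => Finset.sum_le_sum fun j hj => ?_
    exact (hM.2 i j (Ne.symm (Finset.ne_of_mem_erase hj))).1
  have h3 : ∑ i ∈ s, ∑ _j ∈ s.erase i, a = k * ((k - 1) * a) := by
    rw [Finset.sum_congr rfl (fun i hi => by
      rw [Finset.sum_const, Finset.card_erase_of_mem hi, hcard, smul_eq_mul])]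
    rw [Finset.sum_const, hcard, smul_eq_mul]
  have h4 : a * (k * (k - 1)) = k * ((k - 1) * a) := by ring
  rw [h4, h3.symm]
  calc ∑ i ∈ s, ∑ _j ∈ s.erase i, a ≤ ∑ i ∈ s, ∑ j ∈ s.erase i, (M i j + M j i) := h2
    _ = 2 * (∑ i ∈ s, ∑ j ∈ s, M i j) := (double_internal M hM.1 s).symm
    _ ≤ 2 * Spre D k := by omega

lemma necc2 (a b : ℕ) (D : Fin n → ℕ) (M : Fin n → Fin n → ℕ) (hM : Valid a b M)
    (hrow : ∀ i, rsum M i = D i) :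
    ∀ j, j ≤ n → 2 * Spre D n ≤ 2 * Spre D j + b * ((n - j) * (n + j - 1)) := by
  intro j hj
  by_cases hjn : n ≤ j
  · have : j = n := le_antisymm hj hjn
    subst this
    omega
  push_neg at hjn
  set s := univ.filter (fun i : Fin n => ¬ ((i : ℕ) < j)) with hs
  have hcompl : sᶜ = univ.filter (fun i : Fin n => (i : ℕ) < j) := by
    ext i
    simp [hs]
  have hcardc : sᶜ.card = j := by rw [hcompl]; exact card_filter_lt j hj
  have hcard : s.card = n - j := by
    have h1 := Finset.card_compl s
    have h2 := Finset.card_le_univ s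
    simp only [Fintype.card_fin] at h1 h2
    omega
  have hsum_s : Spre D j + ∑ i ∈ s, D i = Spre D n := Spre_split D j
  have hD_r : ∑ i ∈ s, D i = ∑ i ∈ s, rsum M i :=
    Finset.sum_congr rfl fun i _ => (hrow i).symm
  have hsplit := sum_rsum_split M s
  have hint : 2 * ∑ i ∈ s, ∑ j' ∈ s, M i j' ≤ (n - j) * (((n - j) - 1) * b) := by
    rw [double_internal M hM.1 s]
    calc ∑ i ∈ s, ∑ j' ∈ s.erase i, (M i j' + M j' i)
        ≤ ∑ i ∈ s, ∑ _j' ∈ s.erase i, b := by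
          refine Finset.sum_le_sum fun i hi => Finset.sum_le_sum fun j' hj' => ?_
          exact (hM.2 i j' (Ne.symm (Finset.ne_of_mem_erase hj'))).2
      _ = (n - j) * (((n - j) - 1) * b) := by
          rw [Finset.sum_congr rfl (fun i hi => by
            rw [Finset.sum_const, Finset.card_erase_of_mem hi, hcard, smul_eq_mul])]
          rw [Finset.sum_const, hcard, smul_eq_mul]
  have hcrs : ∑ i ∈ s, ∑ j' ∈ sᶜ, M i j' ≤ (n - j) * (j * b) := by
    calc ∑ i ∈ s, ∑ j' ∈ sᶜ, M i j' ≤ ∑ i ∈ s, ∑ j' ∈ sᶜ, b := by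
          refine Finset.sum_le_sum fun i hi => Finset.sum_le_sum fun j' hj' => ?_
          have hne : i ≠ j' := by
            intro he
            rw [← he] at hj'
            exact (Finset.mem_compl.mp hj') hi
          have := (hM.2 i j' hne).2
          omega
      _ = (n - j) * (j * b) := by
          rw [Finset.sum_const, Finset.sum_const, hcard, hcardc, smul_eq_mul, smul_eq_mul]
  have hkey : b * ((n - j) * (n + j - 1))
      = (n - j) * (((n - j) - 1) * b) + 2 * ((n - j) * (j * b)) := by
    have h2' : n + j - 1 = ((n - j) - 1) + 2 * j := by omega
    rw [h2']; ring
  rw [hkey]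
  omega

lemma necc3 (D : Fin n → ℕ) (hD : Monotone D) :
    ∀ k, 1 ≤ k → k ≤ n → ∀ hkn : k - 1 < n,
      Spre D k + (n - k) * D ⟨k - 1, hkn⟩ ≤ Spre D n := by
  intro k hk1 hk2 hkn
  set s := univ.filter (fun i : Fin n => ¬ ((i : ℕ) < k)) with hs
  have hcompl : sᶜ = univ.filter (fun i : Fin n => (i : ℕ) < k) := by
    ext i; simp [hs]
  have hcardc : sᶜ.card = k := by rw [hcompl]; exact card_filter_lt k hk2
  have hcard : s.card = n - k := by
    have h1 := Finset.card_compl s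
    have h2 := Finset.card_le_univ s
    simp only [Fintype.card_fin] at h1 h2
    omega
  have hsum : Spre D k + ∑ i ∈ s, D i = Spre D n := Spre_split D k
  have hge : ∀ i ∈ s, D ⟨k - 1, hkn⟩ ≤ D i := by
    intro i hi
    simp only [hs, Finset.mem_filter, Finset.mem_univ, true_and, not_lt] at hi
    exact hD (by simp only [Fin.le_def]; omega)
  have h2 : (n - k) * D ⟨k - 1, hkn⟩ ≤ ∑ i ∈ s, D i := by
    have := Finset.card_nsmul_le_sum s D (D ⟨k - 1, hkn⟩) hge
    rw [hcard, smul_eq_mul] at this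
    exact this
  omega

lemma Spart_eq (D : Fin n → ℕ) (k : ℕ) : Spart n D k = ((Spre D k : ℕ) : ℤ) := by
  unfold Spart Spre
  rw [Nat.cast_sum, Finset.sum_filter]

lemma two_dvd_mul_pred (k : ℕ) : 2 ∣ k * (k - 1) := by
  cases k with
  | zero => simp
  | succ m =>
    have := Nat.even_mul_succ_self m
    simpa [Nat.succ_sub_one, mul_comm] using this.two_dvd

lemma two_Bbin (k : ℕ) : 2 * Bbin k = ((k * (k - 1) : ℕ) : ℤ) := by
  unfold Bbin
  have h := Nat.div_mul_cancel (two_dvd_mul_pred k)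
  conv_rhs => rw [← h]
  push_cast
  ring

lemma two_Bbin_diff (j N : ℕ) (hj : j ≤ N) (hN : 1 ≤ N) :
    2 * (Bbin N - Bbin j) = (((N - j) * (N + j - 1) : ℕ) : ℤ) := by
  have h1 := two_Bbin N
  have h2 := two_Bbin j
  have e0 : (((N - j) * (N + j - 1) : ℕ) : ℤ) = ((N : ℤ) - j) * ((N : ℤ) + j - 1) := by
    rw [Nat.cast_mul, Nat.cast_sub hj, Nat.cast_sub (show 1 ≤ N + j by omega), Nat.cast_add]
    push_cast
    ring
  have e1 : ((N * (N - 1) : ℕ) : ℤ) = (N : ℤ) * ((N : ℤ) - 1) := by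
    rw [Nat.cast_mul, Nat.cast_sub hN]
    push_cast
    ring
  rcases Nat.eq_zero_or_pos j with rfl | hj1
  · rw [show Bbin 0 = 0 from rfl, sub_zero, h1, e0, e1]
    push_cast
    ring
  · have e2 : ((j * (j - 1) : ℕ) : ℤ) = (j : ℤ) * ((j : ℤ) - 1) := by
      rw [Nat.cast_mul, Nat.cast_sub hj1]
      push_cast
      ring
    rw [e0]
    rw [e1] at h1
    rw [e2] at h2
    linear_combination h1 - h2

lemma Lloss_nonneg (D : Fin n → ℕ) (b : ℕ) (k : ℕ) : 0 ≤ Lloss n D b k := by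
  induction k with
  | zero => exact le_refl 0
  | succ k ih => exact le_trans ih (le_max_left _ _)

lemma Lloss_mono (D : Fin n → ℕ) (b : ℕ) : Monotone (Lloss n D b) :=
  monotone_nat_of_le_succ fun k => le_max_left _ _

lemma Lloss_ge (D : Fin n → ℕ) (b : ℕ) (j : ℕ) (hj : 1 ≤ j) :
    (b : ℤ) * Bbin j - Spart n D j ≤ Lloss n D b j := by
  cases j with
  | zero => omega
  | succ m => exact le_max_right _ _

lemma Lloss_le (D : Fin n → ℕ) (b : ℕ)
    (hb2 : ∀ j, j ≤ n → (b : ℤ) * Bbin j - Spart n D j ≤ (b : ℤ) * Bbin n - Spart n D n) :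
    ∀ k, k ≤ n → Lloss n D b k ≤ (b : ℤ) * Bbin n - Spart n D n := by
  intro k
  induction k with
  | zero =>
    intro _
    have h0 := hb2 0 (Nat.zero_le n)
    have hB : Bbin 0 = 0 := rfl
    have hS : Spart n D 0 = 0 := by
      unfold Spart
      simp
    rw [hB, hS] at h0
    have hz : Lloss n D b 0 = 0 := rfl
    rw [hz]
    simp only [mul_zero, zero_sub, neg_le] at h0 ⊢
    linarith
  | succ k ihk =>
    intro h
    exact max_le (ihk (by omega)) (hb2 (k + 1) h)

end ScoreAux

/-- For `n ≥ 2` and `a ≤ b`, a nondecreasing sequence `D` of nonnegative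
integers is the score sequence of some `(a,b,n)`-tournament iff
`a·B_k ≤ S_k ≤ b·B_n − L_k − (n−k)·d_k` for every `1 ≤ k ≤ n`. -/
theorem isScoreSeqAB_iff (n : ℕ) (hn : 2 ≤ n) (a b : ℕ) (hab : a ≤ b)
    (D : Fin n → ℕ) (hD : Monotone D) :
    IsScoreSeqAB n a b D ↔
      ∀ k : ℕ, ∀ _hk1 : 1 ≤ k, ∀ _hk2 : k ≤ n,
        (a : ℤ) * Bbin k ≤ Spart n D k ∧
        Spart n D k ≤
          (b : ℤ) * Bbin n - Lloss n D b k - ((n - k : ℕ) : ℤ) * (D ⟨k - 1, by omega⟩ : ℤ) := by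
  constructor
  · rintro ⟨M, hdiag, hpair, hrow⟩ k hk1 hk2
    have hM : ScoreAux.Valid a b M := ⟨hdiag, hpair⟩
    have hrow' : ∀ i, ScoreAux.rsum M i = D i := hrow
    have N1 := ScoreAux.necc1 a b D M hM hrow'
    have N2 := ScoreAux.necc2 a b D M hM hrow'
    have N3 := ScoreAux.necc3 D hD
    have hb2 : ∀ j, j ≤ n →
        (b : ℤ) * Bbin j - Spart n D j ≤ (b : ℤ) * Bbin n - Spart n D n := by
      intro j hj
      have h := N2 j hj
      have hZ : ((2 * ScoreAux.Spre D n : ℕ) : ℤ)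
          ≤ ((2 * ScoreAux.Spre D j : ℕ) : ℤ) + ((b * ((n - j) * (n + j - 1)) : ℕ) : ℤ) := by
        exact_mod_cast h
      have e1 : ((2 * ScoreAux.Spre D n : ℕ) : ℤ) = 2 * Spart n D n := by
        rw [ScoreAux.Spart_eq]; push_cast; ring
      have e2 : ((2 * ScoreAux.Spre D j : ℕ) : ℤ) = 2 * Spart n D j := by
        rw [ScoreAux.Spart_eq]; push_cast; ring
      have e3 : ((b * ((n - j) * (n + j - 1)) : ℕ) : ℤ)
          = (b : ℤ) * (2 * (Bbin n - Bbin j)) := by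
        rw [ScoreAux.two_Bbin_diff j n hj (by omega)]
        push_cast
        ring
      rw [e1, e2, e3] at hZ
      linarith
    constructor
    · have h := N1 k hk2
      have hZ : ((a * (k * (k - 1)) : ℕ) : ℤ) ≤ ((2 * ScoreAux.Spre D k : ℕ) : ℤ) := by
        exact_mod_cast h
      have e1 : ((a * (k * (k - 1)) : ℕ) : ℤ) = 2 * ((a : ℤ) * Bbin k) := by
        rw [Nat.cast_mul, ← ScoreAux.two_Bbin]
        ring
      have e2 : ((2 * ScoreAux.Spre D k : ℕ) : ℤ) = 2 * Spart n D k := by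
        rw [ScoreAux.Spart_eq]; push_cast; ring
      rw [e1, e2] at hZ
      linarith
    · have hL := ScoreAux.Lloss_le D b hb2 k hk2
      have h3 := N3 k hk1 hk2 (by omega)
      have h3Z : Spart n D k + ((n - k : ℕ) : ℤ) * (D ⟨k - 1, by omega⟩ : ℤ)
          ≤ Spart n D n := by
        rw [ScoreAux.Spart_eq, ScoreAux.Spart_eq]
        exact_mod_cast h3
      linarith
  · intro h
    have H1 : ∀ k, k ≤ n → a * (k * (k - 1)) ≤ 2 * ScoreAux.Spre D k := by
      intro k hk
      rcases Nat.eq_zero_or_pos k with rfl | hk1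
      · simp
      have hZ := (h k hk1 hk).1
      have e1 : ((a * (k * (k - 1)) : ℕ) : ℤ) = 2 * ((a : ℤ) * Bbin k) := by
        rw [Nat.cast_mul, ← ScoreAux.two_Bbin]
        ring
      have e2 : ((2 * ScoreAux.Spre D k : ℕ) : ℤ) = 2 * Spart n D k := by
        rw [ScoreAux.Spart_eq]; push_cast; ring
      have : ((a * (k * (k - 1)) : ℕ) : ℤ) ≤ ((2 * ScoreAux.Spre D k : ℕ) : ℤ) := by
        rw [e1, e2]
        linarith
      exact_mod_cast this
    have H2 : ∀ j, j ≤ n →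
        2 * ScoreAux.Spre D n ≤ 2 * ScoreAux.Spre D j + b * ((n - j) * (n + j - 1)) := by
      intro j hj
      have hmain := (h n (by omega) le_rfl).2
      have hnn : ((n - n : ℕ) : ℤ) = 0 := by simp
      rw [hnn, zero_mul, sub_zero] at hmain
      have hLj : (b : ℤ) * Bbin j - Spart n D j ≤ Lloss n D b n := by
        rcases Nat.eq_zero_or_pos j with rfl | hj1
        · have hB : Bbin 0 = 0 := rfl
          have hS : Spart n D 0 = 0 := by unfold Spart; simp
          rw [hB, hS]
          simpa using ScoreAux.Lloss_nonneg D b n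
        · exact le_trans (ScoreAux.Lloss_ge D b j hj1) (ScoreAux.Lloss_mono D b hj)
      have e1 : ((2 * ScoreAux.Spre D n : ℕ) : ℤ) = 2 * Spart n D n := by
        rw [ScoreAux.Spart_eq]; push_cast; ring
      have e2 : ((2 * ScoreAux.Spre D j : ℕ) : ℤ) = 2 * Spart n D j := by
        rw [ScoreAux.Spart_eq]; push_cast; ring
      have e3 : ((b * ((n - j) * (n + j - 1)) : ℕ) : ℤ)
          = (b : ℤ) * (2 * (Bbin n - Bbin j)) := by
        rw [ScoreAux.two_Bbin_diff j n hj (by omega)]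
        push_cast
        ring
      have hZ : ((2 * ScoreAux.Spre D n : ℕ) : ℤ)
          ≤ ((2 * ScoreAux.Spre D j : ℕ) : ℤ) + ((b * ((n - j) * (n + j - 1)) : ℕ) : ℤ) := by
        rw [e1, e2, e3]
        linarith
      exact_mod_cast hZ
    obtain ⟨M, hM, hr⟩ := ScoreAux.suffic a b hab D (by omega) hD H1 H2
    exact ⟨M, hM.1, hM.2, hr⟩
end

section
/- Let n ≥ 2 and k ≥ 1 be integers. A nondecreasing sequence D = (d_1, d_2, …, d_n) of nonnegative integers is the score sequence of some (k,k,n)-tournament (i.e., a generalised tournament in which every pair of distinct players shares exactly k points) if and only if d_1 + ⋯ + d_n = k·B_n and d_1 + ⋯ + d_i ≥ k·B_i for every i with 1 ≤ i ≤ n, where B_i = i(i−1)/2. -/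
open Finset

lemma sum_ite_lt_eq {n m : ℕ} (hm : m ≤ n) (g : ℕ → ℕ) :
    ∑ i : Fin n, (if (i:ℕ) < m then g i else 0) = ∑ t ∈ range m, g t := by
  rw [Fin.sum_univ_eq_sum_range (fun t => if t < m then g t else 0) n]
  rw [← Finset.sum_subset (Finset.range_subset_range.2 hm)
      (fun x _ hx => by rw [if_neg (by simpa using hx)])]
  exact Finset.sum_congr rfl fun x hx => if_pos (Finset.mem_range.1 hx)

lemma move {n k : ℕ} (M : Fin n → Fin n → ℕ)
    (h0 : ∀ i, M i i = 0) (hp : ∀ i j, i ≠ j → M i j + M j i = k)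
    (a b : Fin n) (hab : a ≠ b) (h1 : 1 ≤ M b a) :
    ∃ M2 : Fin n → Fin n → ℕ,
      (∀ i, M2 i i = 0) ∧ (∀ i j, i ≠ j → M2 i j + M2 j i = k) ∧
      (∑ l, M2 a l = ∑ l, M a l + 1) ∧ (∑ l, M2 b l + 1 = ∑ l, M b l) ∧
      (∀ x, x ≠ a → x ≠ b → ∑ l, M2 x l = ∑ l, M x l) ∧
      (∀ x y, ¬(x = a ∧ y = b) → ¬(x = b ∧ y = a) → M2 x y = M x y) := by
  set M2 : Fin n → Fin n → ℕ := fun x y => if x = a ∧ y = b then M a b + 1 else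
      if x = b ∧ y = a then M b a - 1 else M x y with hM2def
  have hM2 : ∀ x y, M2 x y = if x = a ∧ y = b then M a b + 1 else
      if x = b ∧ y = a then M b a - 1 else M x y := fun _ _ => rfl
  have hother : ∀ x y, ¬(x = a ∧ y = b) → ¬(x = b ∧ y = a) → M2 x y = M x y := by
    intro x y hx hy; rw [hM2, if_neg hx, if_neg hy]
  have hrowa : ∀ l, M2 a l = M a l + (if l = b then 1 else 0) := by
    intro l
    by_cases h : l = b
    · subst h; rw [hM2, if_pos ⟨rfl, rfl⟩, if_pos rfl]
    · rw [hother a l (by tauto) (by rintro ⟨rfl, -⟩; exact hab rfl), if_neg h, add_zero]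
  have hrowb : ∀ l, M2 b l + (if l = a then 1 else 0) = M b l := by
    intro l
    by_cases h : l = a
    · subst h
      rw [hM2, if_neg (by rintro ⟨rfl, -⟩; exact hab rfl), if_pos ⟨rfl, rfl⟩, if_pos rfl]
      omega
    · rw [hother b l (by rintro ⟨rfl, -⟩; exact hab rfl) (by tauto), if_neg h, add_zero]
  refine ⟨M2, ?_, ?_, ?_, ?_, ?_, hother⟩
  · intro i
    rw [hother i i (by rintro ⟨rfl, rfl⟩; exact hab rfl)
      (by rintro ⟨rfl, rfl⟩; exact hab rfl), h0]
  · intro i j hij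
    have hk := hp a b hab
    have hk2 := hp i j hij
    by_cases h1' : i = a ∧ j = b
    · have hne : ¬(j = a ∧ i = b) := by
        rintro ⟨h2, -⟩; exact hij (h1'.1.trans h2.symm)
      rw [hM2, if_pos h1', hM2, if_neg hne, if_pos ⟨h1'.2, h1'.1⟩]
      obtain ⟨rfl, rfl⟩ := h1'
      omega
    · by_cases h2' : i = b ∧ j = a
      · rw [hM2, if_neg h1', if_pos h2', hM2, if_pos ⟨h2'.2, h2'.1⟩]
        obtain ⟨rfl, rfl⟩ := h2'
        omega
      · rw [hother i j h1' h2',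
          hother j i (by rintro ⟨rfl, rfl⟩; exact h2' ⟨rfl, rfl⟩)
            (by rintro ⟨rfl, rfl⟩; exact h1' ⟨rfl, rfl⟩)]
        exact hk2
  · rw [Finset.sum_congr rfl fun l _ => hrowa l, Finset.sum_add_distrib,
      Finset.sum_ite_eq' Finset.univ b (fun _ => 1), if_pos (Finset.mem_univ b)]
  · rw [← Finset.sum_congr rfl fun l _ => hrowb l, Finset.sum_add_distrib,
      Finset.sum_ite_eq' Finset.univ a (fun _ => 1), if_pos (Finset.mem_univ a)]
  · intro x hxa hxb
    exact Finset.sum_congr rfl fun l _ => hother x l (by tauto) (by tauto)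

lemma transfer {n k : ℕ} (M' : Fin n → Fin n → ℕ)
    (h0 : ∀ i, M' i i = 0) (hp : ∀ i j, i ≠ j → M' i j + M' j i = k)
    (i j : Fin n) (hij : i ≠ j) (hlt : ∑ l, M' i l + 2 ≤ ∑ l, M' j l) :
    ∃ M : Fin n → Fin n → ℕ,
      (∀ x, M x x = 0) ∧ (∀ x y, x ≠ y → M x y + M y x = k) ∧
      (∑ l, M i l = ∑ l, M' i l + 1) ∧ (∑ l, M j l + 1 = ∑ l, M' j l) ∧
      (∀ x, x ≠ i → x ≠ j → ∑ l, M x l = ∑ l, M' x l) := by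
  by_cases h : 1 ≤ M' j i
  · obtain ⟨M2, a1, a2, a3, a4, a5, -⟩ := move M' h0 hp i j hij h
    exact ⟨M2, a1, a2, a3, a4, a5⟩
  · have hji : M' j i = 0 := by omega
    have hijk : M' i j = k := by have := hp i j hij; omega
    set s : Finset (Fin n) := (Finset.univ.erase i).erase j with hs
    have hjmem : j ∈ Finset.univ.erase i := Finset.mem_erase.2 ⟨hij.symm, Finset.mem_univ j⟩
    have himem : i ∈ Finset.univ.erase j := Finset.mem_erase.2 ⟨hij, Finset.mem_univ i⟩
    have Dj : ∑ l, M' j l = ∑ l ∈ s, M' j l := by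
      rw [← Finset.add_sum_erase Finset.univ (M' j) (Finset.mem_univ i), hji, zero_add,
        ← Finset.add_sum_erase _ (M' j) hjmem, h0, zero_add]
    have Di : ∑ l, M' i l = k + ∑ l ∈ s, M' i l := by
      rw [← Finset.add_sum_erase Finset.univ (M' i) (Finset.mem_univ j), hijk,
        ← Finset.add_sum_erase _ (M' i) himem, h0, zero_add, hs,
        show (Finset.univ.erase j).erase i = (Finset.univ.erase i).erase j by
          ext x; simp; tauto]
    have hsum : ∑ l ∈ s, M' i l < ∑ l ∈ s, M' j l := by omega
    obtain ⟨l, hls, hl⟩ := Finset.exists_lt_of_sum_lt hsum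
    have hlj : l ≠ j := (Finset.mem_erase.1 hls).1
    have hli : l ≠ i := (Finset.mem_erase.1 (Finset.mem_erase.1 hls).2).1
    have h1 : 1 ≤ M' j l := by omega
    have h2 : 1 ≤ M' l i := by
      have e1 := hp i l (Ne.symm hli)
      have e2 := hp j l (Ne.symm hlj)
      omega
    obtain ⟨M2, b1, b2, b3, b4, b5, b6⟩ := move M' h0 hp l j hlj h1
    have h2' : 1 ≤ M2 l i := by
      rw [b6 l i (by rintro ⟨-, rfl⟩; exact hij rfl) (by rintro ⟨rfl, -⟩; exact hlj rfl)]
      exact h2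
    obtain ⟨M3, c1, c2, c3, c4, c5, -⟩ := move M2 b1 b2 i l (Ne.symm hli) h2'
    refine ⟨M3, c1, c2, ?_, ?_, ?_⟩
    · rw [c3, b5 i (Ne.symm hli) hij]
    · rw [c5 j hij.symm (Ne.symm hlj)]; exact b4
    · intro x hxi hxj
      by_cases hxl : x = l
      · subst hxl
        have e3 := b3
        have e4 := c4
        omega
      · rw [c5 x hxi hxl, b5 x hxl hxj]

def gxD {n : ℕ} (D : Fin n → ℕ) (t : ℕ) : ℕ := if h : t < n then D ⟨t, h⟩ else 0



lemma gxD_lt {n : ℕ} (D : Fin n → ℕ) {t : ℕ} (h : t < n) : gxD D t = D ⟨t, h⟩ :=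
  dif_pos h

lemma construct {n k : ℕ} (hk : 1 ≤ k) :
    ∀ Φ : ℕ, ∀ D : Fin n → ℕ, Monotone D →
    (∀ m, m ≤ n → k * (∑ t ∈ range m, t) ≤ ∑ t ∈ range m, gxD D t) →
    (∑ t ∈ range n, gxD D t = k * ∑ t ∈ range n, t) →
    (∑ m ∈ range (n+1), (∑ t ∈ range m, gxD D t - k * ∑ t ∈ range m, t) = Φ) →
    ∃ M : Fin n → Fin n → ℕ, (∀ i, M i i = 0) ∧
      (∀ i j, i ≠ j → M i j + M j i = k) ∧ (∀ i, ∑ j, M i j = D i) := by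
  intro Φ
  induction Φ using Nat.strong_induction_on with
  | _ Φ IH =>
  intro D hmono hpre htot hphi
  have hgx : ∀ x : Fin n, gxD D (x : ℕ) = D x := by
    intro x; simp [gxD, x.isLt]
  have Srec : ∀ m, ∑ t ∈ range (m+1), gxD D t = (∑ t ∈ range m, gxD D t) + gxD D m :=
    fun m => Finset.sum_range_succ _ m
  have kBrec : ∀ m, k * (∑ t ∈ range (m+1), t) = k * (∑ t ∈ range m, t) + k * m := by
    intro m; rw [Finset.sum_range_succ, Nat.mul_add]
  by_cases hz : Φ = 0
  · -- base case: D x = k * x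
    subst hz
    have hterm : ∀ m, m ≤ n → ∑ t ∈ range m, gxD D t = k * ∑ t ∈ range m, t := by
      intro m hm
      have h1 := hpre m hm
      have h2 : (∑ t ∈ range m, gxD D t) - k * (∑ t ∈ range m, t) = 0 :=
        Finset.sum_eq_zero_iff.1 hphi m (Finset.mem_range.2 (by omega))
      omega
    have hDx : ∀ x : Fin n, D x = k * (x : ℕ) := by
      intro x
      have h1 := Srec (x : ℕ)
      have h2 := kBrec (x : ℕ)
      have h3 := hterm (x : ℕ) (le_of_lt x.isLt)
      have h4 := hterm ((x : ℕ) + 1) x.isLt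
      have h5 := hgx x
      omega
    set M : Fin n → Fin n → ℕ := fun x y => if (y:ℕ) < (x:ℕ) then k else 0 with hMdef
    have hMv : ∀ x y, M x y = if (y:ℕ) < (x:ℕ) then k else 0 := fun _ _ => rfl
    refine ⟨M, ?_, ?_, ?_⟩
    · intro x; rw [hMv, if_neg (lt_irrefl _)]
    · intro x y hxy
      have : (x:ℕ) ≠ (y:ℕ) := fun h => hxy (Fin.ext h)
      rw [hMv, hMv]
      split_ifs <;> omega
    · intro x
      have : ∀ y : Fin n, M x y = if (y:ℕ) < (x:ℕ) then k else 0 := fun y => rfl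
      rw [Finset.sum_congr rfl fun y _ => this y,
        sum_ite_lt_eq (le_of_lt x.isLt) (fun _ => k), Finset.sum_const,
        Finset.card_range, smul_eq_mul, hDx x, Nat.mul_comm]
  · -- inductive step
    have hex : ∃ m, m ≤ n ∧ k * (∑ t ∈ range m, t) < ∑ t ∈ range m, gxD D t := by
      by_contra hnone
      push_neg at hnone
      apply hz
      rw [← hphi]
      refine Finset.sum_eq_zero fun m hm => ?_
      have hm' : m ≤ n := by have := Finset.mem_range.1 hm; omega
      have := hnone m hm'
      omega
    set m₀ := Nat.find hex with hm₀def
    obtain ⟨hm₀n, hm₀lt⟩ := Nat.find_spec hex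
    rw [← hm₀def] at hm₀n hm₀lt
    have hm₀pos : 1 ≤ m₀ := by
      rcases Nat.eq_zero_or_pos m₀ with h | h
      · rw [h] at hm₀lt; simp at hm₀lt
      · exact h
    have hm₀n' : m₀ < n := by
      rcases lt_or_eq_of_le hm₀n with h | h
      · exact h
      · rw [h] at hm₀lt; omega
    have hbelow : ∀ m, m < m₀ → ∑ t ∈ range m, gxD D t = k * ∑ t ∈ range m, t := by
      intro m hm
      have h1 := Nat.find_min hex hm
      have h2 := hpre m (by omega)
      push_neg at h1
      have := h1 (by omega)
      omega
    have hexq : ∃ q, m₀ < q ∧ q ≤ n ∧ ∑ t ∈ range q, gxD D t ≤ k * ∑ t ∈ range q, t :=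
      ⟨n, hm₀n', le_refl n, le_of_eq htot⟩
    set q₀ := Nat.find hexq with hq₀def
    obtain ⟨hq₀m, hq₀n, hq₀le⟩ := Nat.find_spec hexq
    rw [← hq₀def] at hq₀m hq₀n hq₀le
    have hstrict : ∀ m, m₀ ≤ m → m < q₀ → k * (∑ t ∈ range m, t) < ∑ t ∈ range m, gxD D t := by
      intro m h1 h2
      rcases eq_or_lt_of_le h1 with h | h
      · rw [← h]; exact hm₀lt
      · have h3 := Nat.find_min hexq h2
        push_neg at h3
        exact h3 h (by omega)
    set i := m₀ - 1 with hidef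
    set j := q₀ - 1 with hjdef
    have hij : i < j := by omega
    have hjn : j < n := by omega
    have hin : i < n := by omega
    -- arithmetic facts
    have factA : k * i + 1 ≤ gxD D i := by
      have e1 := Srec i
      have e2 : i + 1 = m₀ := by omega
      have e4 := kBrec i
      rw [e2] at e1 e4
      have e3 := hbelow i (by omega)
      omega
    have factB : 1 ≤ i → gxD D (i-1) + k + 1 ≤ gxD D i := by
      intro h1
      have e1 := Srec (i-1)
      have e2 : i - 1 + 1 = i := by omega
      have e4 := kBrec (i-1)
      rw [e2] at e1 e4
      have e3 := hbelow i (by omega)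
      have e5 := hpre (i-1) (by omega)
      have e6 : k * i = k * (i-1) + k := by
        conv_lhs => rw [show i = (i-1) + 1 by omega]
        rw [Nat.mul_add, Nat.mul_one]
      omega
    have factC : gxD D j + 1 ≤ k * j := by
      have e1 := Srec j
      have e2 : j + 1 = q₀ := by omega
      have e4 := kBrec j
      rw [e2] at e1 e4
      have e3 := hstrict j (by omega) (by omega)
      omega
    have factD : j + 1 < n → gxD D j + 2 ≤ gxD D (j+1) := by
      intro h1
      have e1 := Srec (j+1)
      have e2 : j + 1 = q₀ := by omega
      have e4 := kBrec (j+1)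
      have e5 := hpre (j+1+1) (by omega)
      have e6 : k * (j+1) = k * j + k := by rw [Nat.mul_add, Nat.mul_one]
      have e7 := kBrec j
      rw [e2] at e7
      rw [← e2] at hq₀le
      omega
    have hge1 : 1 ≤ gxD D i := by omega
    set D' : Fin n → ℕ := fun x => if (x:ℕ) = i then D x - 1 else
      if (x:ℕ) = j then D x + 1 else D x with hD'def
    have hD'v : ∀ x : Fin n, D' x = if (x:ℕ) = i then D x - 1 else
      if (x:ℕ) = j then D x + 1 else D x := fun _ => rfl
    have hgx' : ∀ t, gxD D' t + (if t = i then 1 else 0) = gxD D t + (if t = j then 1 else 0) := by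
      intro t
      by_cases ht : t < n
      · have hDt : gxD D t = D ⟨t, ht⟩ := dif_pos ht
        have hDt' : gxD D' t = D' ⟨t, ht⟩ := dif_pos ht
        rw [hDt, hDt', hD'v]
        by_cases h1 : t = i
        · rw [if_pos h1, if_pos h1, if_neg (by omega)]
          have : gxD D i = D ⟨t, ht⟩ := by rw [← h1]; exact gxD_lt D ht
          omega
        · rw [if_neg h1, if_neg h1]
          by_cases h2 : t = j
          · rw [if_pos h2, if_pos h2]
          · rw [if_neg h2, if_neg h2]
      · have h1 : gxD D t = 0 := dif_neg ht
        have h2 : gxD D' t = 0 := dif_neg ht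
        rw [h1, h2, if_neg (by omega), if_neg (by omega)]
    have hS' : ∀ m, (∑ t ∈ range m, gxD D' t) + (if i < m then 1 else 0)
        = (∑ t ∈ range m, gxD D t) + (if j < m then 1 else 0) := by
      intro m
      have e1 : ∑ t ∈ range m, (if t = i then (1:ℕ) else 0) = if i < m then 1 else 0 := by
        rw [Finset.sum_ite_eq' (range m) i (fun _ => 1)]
        simp [Finset.mem_range]
      have e2 : ∑ t ∈ range m, (if t = j then (1:ℕ) else 0) = if j < m then 1 else 0 := by
        rw [Finset.sum_ite_eq' (range m) j (fun _ => 1)]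
        simp [Finset.mem_range]
      calc (∑ t ∈ range m, gxD D' t) + (if i < m then 1 else 0)
          = ∑ t ∈ range m, (gxD D' t + if t = i then 1 else 0) := by
            rw [Finset.sum_add_distrib, e1]
        _ = ∑ t ∈ range m, (gxD D t + if t = j then 1 else 0) :=
            Finset.sum_congr rfl fun t _ => hgx' t
        _ = (∑ t ∈ range m, gxD D t) + (if j < m then 1 else 0) := by
            rw [Finset.sum_add_distrib, e2]
    have hmono' : Monotone D' := by
      intro x y hxy
      by_cases hxyeq : x = y
      · rw [hxyeq]
      · have hv : (x:ℕ) < (y:ℕ) :=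
          lt_of_le_of_ne (by exact_mod_cast hxy) (fun h => hxyeq (Fin.ext h))
        rw [hD'v, hD'v]
        by_cases hyi : (y:ℕ) = i
        · have hx : (x:ℕ) < i := by omega
          have h1i : 1 ≤ i := by omega
          rw [if_neg (by omega), if_neg (by omega), if_pos hyi]
          have e1 : D x ≤ D ⟨i-1, by omega⟩ := hmono (by rw [Fin.le_def]; simp; omega)
          have e2 : gxD D (i-1) = D ⟨i-1, by omega⟩ := gxD_lt D (by omega)
          have e3 : gxD D i = D y := by
            rw [show y = ⟨i, hin⟩ from Fin.ext hyi]; exact gxD_lt D hin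
          have := factB h1i
          omega
        · by_cases hxj : (x:ℕ) = j
          · have hy : j < (y:ℕ) := by omega
            have hjn1 : j + 1 < n := by have := y.isLt; omega
            rw [if_neg (by omega), if_pos hxj, if_neg hyi, if_neg (by omega)]
            have e1 : D ⟨j+1, hjn1⟩ ≤ D y := hmono (by rw [Fin.le_def]; simp; omega)
            have e2 : gxD D (j+1) = D ⟨j+1, hjn1⟩ := gxD_lt D hjn1
            have e3 : gxD D j = D x := by
              rw [show x = ⟨j, hjn⟩ from Fin.ext hxj]; exact gxD_lt D hjn
            have := factD hjn1
            omega
          · have h1 : (if (x:ℕ) = i then D x - 1 else if (x:ℕ) = j then D x + 1 else D x)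
                ≤ D x := by split_ifs <;> omega
            have h2 : D y ≤ (if (y:ℕ) = i then D y - 1 else
                if (y:ℕ) = j then D y + 1 else D y) := by
              rw [if_neg hyi]; split_ifs <;> omega
            exact le_trans h1 (le_trans (hmono hxy) h2)
    have hpre' : ∀ m, m ≤ n → k * (∑ t ∈ range m, t) ≤ ∑ t ∈ range m, gxD D' t := by
      intro m hm
      have hid := hS' m
      have h0 := hpre m hm
      by_cases h1 : i < m
      · by_cases h2 : j < m
        · rw [if_pos h1, if_pos h2] at hid; omega
        · rw [if_pos h1, if_neg h2] at hid
          have h3 := hstrict m (by omega) (by omega)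
          omega
      · rw [if_neg h1, if_neg (by omega)] at hid; omega
    have htot' : ∑ t ∈ range n, gxD D' t = k * ∑ t ∈ range n, t := by
      have hid := hS' n
      rw [if_pos hin, if_pos hjn] at hid
      omega
    have hres : ∀ m, ∑ t ∈ range m, gxD D' t ≤ ∑ t ∈ range m, gxD D t := by
      intro m
      have hid := hS' m
      by_cases h1 : i < m
      · by_cases h2 : j < m
        · rw [if_pos h1, if_pos h2] at hid; omega
        · rw [if_pos h1, if_neg h2] at hid; omega
      · rw [if_neg h1, if_neg (by omega)] at hid; omega
    have hlt : (∑ m ∈ range (n+1), (∑ t ∈ range m, gxD D' t - k * ∑ t ∈ range m, t)) < Φ := by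
      rw [← hphi]
      refine Finset.sum_lt_sum (fun m _ => Nat.sub_le_sub_right (hres m) _) ⟨m₀, ?_, ?_⟩
      · exact Finset.mem_range.2 (by omega)
      · have hid := hS' m₀
        rw [if_pos (by omega), if_neg (by omega)] at hid
        omega
    obtain ⟨M', e0, ep, er⟩ := IH _ hlt D' hmono' hpre' htot' rfl
    set fi : Fin n := ⟨i, hin⟩ with hfidef
    set fj : Fin n := ⟨j, hjn⟩ with hfjdef
    have hfij : fi ≠ fj := by
      intro h; have := congrArg Fin.val h; simp [hfidef, hfjdef] at this; omega
    have hDfi : gxD D i = D fi := gxD_lt D hin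
    have hrowi : ∑ l, M' fi l = D fi - 1 := by
      rw [er fi, hD'v]; rw [if_pos rfl]
    have hrowj : ∑ l, M' fj l = D fj + 1 := by
      rw [er fj, hD'v]; rw [if_neg (by simp [hfjdef]; omega), if_pos rfl]
    have hmfij : D fi ≤ D fj := hmono (by rw [Fin.le_def]; simp [hfidef, hfjdef]; omega)
    have hlt2 : ∑ l, M' fi l + 2 ≤ ∑ l, M' fj l := by
      rw [hrowi, hrowj]; omega
    obtain ⟨M, f0, fp, f3, f4, f5⟩ := transfer M' e0 ep fi fj hfij hlt2
    refine ⟨M, f0, fp, fun x => ?_⟩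
    by_cases hx1 : x = fi
    · rw [hx1, f3, hrowi]; omega
    · by_cases hx2 : x = fj
      · rw [hx2]; rw [hrowj] at f4; omega
      · rw [f5 x hx1 hx2, er x, hD'v,
          if_neg (fun h => hx1 (Fin.ext h)), if_neg (fun h => hx2 (Fin.ext h))]

lemma key_eq {n k m : ℕ} (M : Fin n → Fin n → ℕ)
    (h0 : ∀ i, M i i = 0) (hp : ∀ i j, i ≠ j → M i j + M j i = k) (hm : m ≤ n) :
    (∑ i : Fin n, ∑ j : Fin n, if (i:ℕ) < m ∧ (j:ℕ) < m then M i j else 0)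
      + (∑ i : Fin n, ∑ j : Fin n, if (i:ℕ) < m ∧ (j:ℕ) < m then M i j else 0)
      + m * k = m * (m * k) := by
  set X := ∑ i : Fin n, ∑ j : Fin n, if (i:ℕ) < m ∧ (j:ℕ) < m then M i j else 0 with hX
  have hconstk : ∀ p : ℕ, p ≤ n →
      (∑ j : Fin n, if (j:ℕ) < p then k else 0) = p * k := by
    intro p hp'
    rw [sum_ite_lt_eq hp' (fun _ => k), Finset.sum_const, Finset.card_range, smul_eq_mul]
  have X2 : X = ∑ i : Fin n, ∑ j : Fin n, if (i:ℕ) < m ∧ (j:ℕ) < m then M j i else 0 := by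
    rw [hX, Finset.sum_comm]
    refine Finset.sum_congr rfl fun i _ => Finset.sum_congr rfl fun j _ => ?_
    exact if_congr and_comm rfl rfl
  have hXX : X + X = ∑ i : Fin n, ∑ j : Fin n,
      if (i:ℕ) < m ∧ (j:ℕ) < m then (if i = j then 0 else k) else 0 := by
    nth_rewrite 2 [X2]
    rw [hX, ← Finset.sum_add_distrib]
    refine Finset.sum_congr rfl fun i _ => ?_
    rw [← Finset.sum_add_distrib]
    refine Finset.sum_congr rfl fun j _ => ?_
    by_cases hc : (i:ℕ) < m ∧ (j:ℕ) < m
    · rw [if_pos hc, if_pos hc, if_pos hc]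
      by_cases hij : i = j
      · rw [if_pos hij, hij, h0]
      · rw [if_neg hij, hp i j hij]
    · rw [if_neg hc, if_neg hc, if_neg hc]
  have inner : ∀ i : Fin n,
      (∑ j : Fin n, if (i:ℕ) < m ∧ (j:ℕ) < m then (if i = j then 0 else k) else 0)
        + (if (i:ℕ) < m then k else 0) = if (i:ℕ) < m then m * k else 0 := by
    intro i
    by_cases hi : (i:ℕ) < m
    · rw [if_pos hi, if_pos hi]
      have e1 : ∀ j : Fin n, (if (i:ℕ) < m ∧ (j:ℕ) < m then (if i = j then 0 else k) else 0)
          + (if j = i then k else 0) = if (j:ℕ) < m then k else 0 := by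
        intro j
        by_cases h1 : j = i
        · subst h1; rw [if_pos rfl, if_pos hi, if_pos ⟨hi, hi⟩, if_pos rfl, zero_add]
        · rw [if_neg h1]
          by_cases h2 : (j:ℕ) < m
          · rw [if_pos ⟨hi, h2⟩, if_pos h2, if_neg (fun h => h1 h.symm), add_zero]
          · rw [if_neg (fun h => h2 h.2), if_neg h2, add_zero]
      calc (∑ j : Fin n, if (i:ℕ) < m ∧ (j:ℕ) < m then (if i = j then 0 else k) else 0) + k
          = ∑ j : Fin n, ((if (i:ℕ) < m ∧ (j:ℕ) < m then (if i = j then 0 else k) else 0)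
            + (if j = i then k else 0)) := by
            rw [Finset.sum_add_distrib, Finset.sum_ite_eq' Finset.univ i (fun _ => k),
              if_pos (Finset.mem_univ i)]
        _ = ∑ j : Fin n, if (j:ℕ) < m then k else 0 := Finset.sum_congr rfl fun j _ => e1 j
        _ = m * k := hconstk m hm
    · rw [if_neg hi, if_neg hi, add_zero]
      exact Finset.sum_eq_zero fun j _ => if_neg (fun h => hi h.1)
  calc X + X + m * k
      = (∑ i : Fin n, ∑ j : Fin n,
          if (i:ℕ) < m ∧ (j:ℕ) < m then (if i = j then 0 else k) else 0)
        + (∑ i : Fin n, if (i:ℕ) < m then k else 0) := by rw [hXX, hconstk m hm]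
    _ = ∑ i : Fin n, ((∑ j : Fin n,
          if (i:ℕ) < m ∧ (j:ℕ) < m then (if i = j then 0 else k) else 0)
        + (if (i:ℕ) < m then k else 0)) := (Finset.sum_add_distrib).symm
    _ = ∑ i : Fin n, (if (i:ℕ) < m then m * k else 0) :=
        Finset.sum_congr rfl fun i _ => inner i
    _ = m * (m * k) := by
          rw [sum_ite_lt_eq hm (fun _ => m * k), Finset.sum_const, Finset.card_range,
            smul_eq_mul]

lemma half_eq (k m : ℕ) :
    k * (m*(m-1)/2) + k * (m*(m-1)/2) + m * k = m * (m * k) := by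
  rcases m with _ | m'
  · simp
  · have hdvd : 2 ∣ (m' + 1) * m' := by
      rw [Nat.mul_comm]
      exact (Nat.even_mul_succ_self m').two_dvd
    obtain ⟨c, hc⟩ := hdvd
    have hq : (m' + 1) * m' / 2 = c := by omega
    simp only [Nat.add_sub_cancel]
    rw [hq]
    calc k * c + k * c + (m'+1) * k = k * (2 * c) + (m'+1) * k := by ring
      _ = k * ((m'+1) * m') + (m'+1) * k := by rw [← hc]
      _ = (m'+1) * ((m'+1) * k) := by ring

lemma X_le_partial {n m : ℕ} (M : Fin n → Fin n → ℕ) :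
    (∑ i : Fin n, ∑ j : Fin n, if (i:ℕ) < m ∧ (j:ℕ) < m then M i j else 0)
      ≤ ∑ i : Fin n, (if (i:ℕ) < m then (∑ j, M i j) else 0) := by
  refine Finset.sum_le_sum fun i _ => ?_
  by_cases hi : (i:ℕ) < m
  · rw [if_pos hi]
    refine Finset.sum_le_sum fun j _ => ?_
    by_cases hj : (j:ℕ) < m
    · rw [if_pos ⟨hi, hj⟩]
    · rw [if_neg (fun h => hj h.2)]; exact Nat.zero_le _
  · rw [if_neg hi]
    exact le_of_eq (Finset.sum_eq_zero fun j _ => if_neg (fun h => hi h.1))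

lemma forward_partial {n k m : ℕ} (M : Fin n → Fin n → ℕ)
    (h0 : ∀ i, M i i = 0) (hp : ∀ i j, i ≠ j → M i j + M j i = k) (hm : m ≤ n) :
    k * (m*(m-1)/2) ≤ ∑ i : Fin n, (if (i:ℕ) < m then (∑ j, M i j) else 0) := by
  have hkey := key_eq M h0 hp hm
  have hle := X_le_partial (m := m) M
  have hhalf := half_eq k m
  omega

lemma forward_total {n k : ℕ} (M : Fin n → Fin n → ℕ)
    (h0 : ∀ i, M i i = 0) (hp : ∀ i j, i ≠ j → M i j + M j i = k) :
    ∑ i : Fin n, (∑ j, M i j) = k * (n*(n-1)/2) := by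
  have hkey := key_eq M h0 hp (le_refl n)
  have hhalf := half_eq k n
  have hXeq : (∑ i : Fin n, ∑ j : Fin n, if (i:ℕ) < n ∧ (j:ℕ) < n then M i j else 0)
      = ∑ i : Fin n, ∑ j : Fin n, M i j :=
    Finset.sum_congr rfl fun i _ => Finset.sum_congr rfl fun j _ =>
      if_pos ⟨i.isLt, j.isLt⟩
  omega

/-- For `n ≥ 2` and `k ≥ 1`, a nondecreasing sequence `D` of nonnegative
integers is the score sequence of some `(k,k,n)`-tournament iff `∑ D = k·B_n` and the
partial sum `d_1 + ⋯ + d_m` is at least `k·B_m` for every `1 ≤ m ≤ n`, where `B_m = m(m-1)/2`. -/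




theorem isScoreSeq_kk_iff (n : ℕ) (hn : 2 ≤ n) (k : ℕ) (hk : 1 ≤ k)
    (D : Fin n → ℕ) (hD : Monotone D) :
    (∃ M : Fin n → Fin n → ℕ,
        (∀ i, M i i = 0) ∧
        (∀ i j, i ≠ j → M i j + M j i = k) ∧
        (∀ i, ∑ j, M i j = D i)) ↔
      ((∑ i, D i) = k * (n * (n - 1) / 2) ∧
        ∀ m : ℕ, 1 ≤ m → m ≤ n →
          k * (m * (m - 1) / 2) ≤ ∑ i : Fin n, if (i : ℕ) < m then D i else 0) := by
  have conv1 : ∀ m, m ≤ n → (∑ i : Fin n, if (i:ℕ) < m then D i else 0)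
      = ∑ t ∈ range m, gxD D t := by
    intro m hm
    rw [← sum_ite_lt_eq hm (gxD D)]
    refine Finset.sum_congr rfl fun i _ => ?_
    by_cases h : (i:ℕ) < m
    · rw [if_pos h, if_pos h, gxD_lt D i.isLt, Fin.eta]
    · rw [if_neg h, if_neg h]
  have conv2 : (∑ i : Fin n, D i) = ∑ t ∈ range n, gxD D t := by
    rw [← conv1 n le_rfl]
    exact (Finset.sum_congr rfl fun i _ => (if_pos i.isLt).symm)
  constructor
  · rintro ⟨M, h0, hp, hrow⟩
    constructor
    · rw [← forward_total M h0 hp]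
      exact Finset.sum_congr rfl fun i _ => (hrow i).symm
    · intro m hm1 hmn
      have := forward_partial M h0 hp hmn
      calc k * (m * (m-1) / 2) ≤ ∑ i : Fin n, (if (i:ℕ) < m then (∑ j, M i j) else 0) := this
        _ = ∑ i : Fin n, if (i:ℕ) < m then D i else 0 := by
            refine Finset.sum_congr rfl fun i _ => ?_
            by_cases h : (i:ℕ) < m
            · rw [if_pos h, if_pos h, hrow]
            · rw [if_neg h, if_neg h]
  · rintro ⟨htot, hpar⟩
    refine construct hk _ D hD ?_ ?_ rfl
    · intro m hm
      rcases Nat.eq_zero_or_pos m with h | h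
      · subst h; simp
      · rw [← conv1 m hm, Finset.sum_range_id]
        exact hpar m h hm
    · rw [← conv2, Finset.sum_range_id, htot]
end

section
/- Let n ≥ 2. A nondecreasing sequence D = (d_1, d_2, …, d_n) of nonnegative integers is the score sequence of some (1,1,n)-tournament (i.e., an ordinary round-robin tournament in which every pair of distinct players shares exactly one point) if and only if d_1 + ⋯ + d_n = B_n and d_1 + ⋯ + d_i ≥ B_i for every i with 1 ≤ i ≤ n − 1, where B_i = i(i−1)/2. -/
open Finset

namespace LandauAux

variable {n : ℕ}




/-- prefix sums of `D` -/
def S (D : Fin n → ℕ) (m : ℕ) : ℕ := ∑ i : Fin n, if (i : ℕ) < m then D i else 0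

lemma S_zero (D : Fin n → ℕ) : S D 0 = 0 := by simp [S]

lemma S_succ (D : Fin n → ℕ) (m : ℕ) (hm : m < n) :
    S D (m + 1) = S D m + D ⟨m, hm⟩ := by
  have h : ∀ i : Fin n, (if (i : ℕ) < m + 1 then D i else 0)
      = (if (i : ℕ) < m then D i else 0) + (if i = ⟨m, hm⟩ then D i else 0) := by
    intro i
    by_cases hi : i = ⟨m, hm⟩
    · subst hi; simp
    · have hi' : (i : ℕ) ≠ m := fun hh => hi (Fin.ext hh)
      rw [if_neg hi]
      split_ifs <;> omega
  unfold S
  rw [Finset.sum_congr rfl fun i _ => h i, Finset.sum_add_distrib,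
    Finset.sum_ite_eq' univ ⟨m, hm⟩ D, if_pos (mem_univ _)]

lemma S_top (D : Fin n → ℕ) : S D n = ∑ i, D i := by
  unfold S; exact sum_congr rfl fun i _ => if_pos i.isLt

lemma choose_succ (m : ℕ) : (m + 1).choose 2 = m.choose 2 + m := by
  rw [Nat.choose_two_right, Nat.choose_two_right, Nat.add_sub_cancel]
  exact Nat.triangle_succ m

/-- the transitive tournament -/
lemma base : ∃ M : Fin n → Fin n → ℕ, (∀ i, M i i = 0) ∧
    (∀ i j, i ≠ j → M i j + M j i = 1) ∧ ∀ i, (∑ j, M i j) = (i : ℕ) := by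
  refine ⟨fun i j => if j < i then 1 else 0, fun i => by simp, ?_, ?_⟩
  · intro i j hij
    have hij' : (i : ℕ) ≠ (j : ℕ) := fun h => hij (Fin.ext h)
    simp only [Fin.lt_def]
    split_ifs <;> omega
  · intro i
    calc ∑ j : Fin n, (if j < i then (1:ℕ) else 0)
        = ∑ j : Fin n, (if (j : ℕ) < (i : ℕ) then (1:ℕ) else 0) := by
          simp only [Fin.lt_def]
      _ = ∑ j ∈ range n, (if j < (i : ℕ) then (1:ℕ) else 0) :=
          Fin.sum_univ_eq_sum_range (fun j => if j < (i : ℕ) then (1:ℕ) else 0) n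
      _ = ∑ j ∈ range (i : ℕ), (if j < (i : ℕ) then (1:ℕ) else 0) :=
          (Finset.sum_subset (range_subset_range.mpr i.isLt.le)
            (fun j _ hj => by simp only [mem_range] at hj ⊢; rw [if_neg (by omega)])).symm
      _ = ∑ j ∈ range (i : ℕ), 1 := sum_congr rfl fun j hj => by
          simp only [mem_range] at hj; rw [if_pos hj]
      _ = (i : ℕ) := by simp

lemma card_lem (m : ℕ) (hm : m ≤ n) :
    ((univ : Finset (Fin n)).filter fun i : Fin n => (i : ℕ) < m).card = m := by
  rw [Finset.card_filter]
  calc ∑ i : Fin n, (if (i : ℕ) < m then (1:ℕ) else 0)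
      = ∑ j ∈ range n, (if j < m then (1:ℕ) else 0) :=
        Fin.sum_univ_eq_sum_range (fun j => if j < m then (1:ℕ) else 0) n
    _
      = ∑ j ∈ range m, (if j < m then (1:ℕ) else 0) :=
        (Finset.sum_subset (range_subset_range.mpr hm)
          (fun j _ hj => by simp only [mem_range] at hj ⊢; rw [if_neg (by omega)])).symm
    _ = ∑ j ∈ range m, 1 := sum_congr rfl fun j hj => by
        simp only [mem_range] at hj; rw [if_pos hj]
    _ = m := by simp

lemma double_count (M : Fin n → Fin n → ℕ) (hd : ∀ i, M i i = 0)
    (hs : ∀ i j, i ≠ j → M i j + M j i = 1) (s : Finset (Fin n)) :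
    2 * ∑ i ∈ s, ∑ j ∈ s, M i j = s.card * (s.card - 1) := by
  have h1 : 2 * ∑ i ∈ s, ∑ j ∈ s, M i j = ∑ i ∈ s, ∑ j ∈ s, (M i j + M j i) := by
    rw [two_mul]
    nth_rewrite 2 [Finset.sum_comm]
    rw [← Finset.sum_add_distrib]
    exact sum_congr rfl fun i _ => (Finset.sum_add_distrib).symm
  have h2 : ∀ i ∈ s, ∑ j ∈ s, (M i j + M j i) = s.card - 1 := by
    intro i hi
    have e : ∑ j ∈ s, (M i j + M j i) + 1 = s.card := by
      have hpt : ∀ j ∈ s, (M i j + M j i) + (if j = i then 1 else 0) = 1 := by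
        intro j hj
        by_cases hji : j = i
        · subst hji; simp [hd j]
        · rw [if_neg hji, hs i j (fun h => hji h.symm)]
      calc ∑ j ∈ s, (M i j + M j i) + 1
          = ∑ j ∈ s, (M i j + M j i) + ∑ j ∈ s, (if j = i then 1 else 0) := by
            rw [Finset.sum_ite_eq' s i (fun _ => 1), if_pos hi]
        _ = ∑ j ∈ s, ((M i j + M j i) + (if j = i then 1 else 0)) :=
            (Finset.sum_add_distrib).symm
        _ = ∑ j ∈ s, 1 := sum_congr rfl hpt
        _ = s.card := by simp
    omega
  rw [h1, sum_congr rfl h2, sum_const, smul_eq_mul]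





lemma flipEdge (M : Fin n → Fin n → ℕ) (hd : ∀ i, M i i = 0)
    (hs : ∀ i j, i ≠ j → M i j + M j i = 1) (x y : Fin n) (hxy : x ≠ y) (h1 : M x y = 1) :
    ∃ M' : Fin n → Fin n → ℕ, (∀ i, M' i i = 0) ∧ (∀ i j, i ≠ j → M' i j + M' j i = 1) ∧
      ((∑ j, M' x j) + 1 = ∑ j, M x j) ∧ (∑ j, M' y j = (∑ j, M y j) + 1) ∧
      (∀ i, i ≠ x → i ≠ y → ∑ j, M' i j = ∑ j, M i j) ∧
      (∀ i j, ¬(i = x ∧ j = y) → ¬(i = y ∧ j = x) → M' i j = M i j) := by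
  have hyx0 : M y x = 0 := by have := hs x y hxy; omega
  refine ⟨fun i j => if i = x ∧ j = y then 0 else if i = y ∧ j = x then 1 else M i j,
    ?_, ?_, ?_, ?_, ?_, ?_⟩
  · intro i
    simp only
    split_ifs with c1 c2
    · rfl
    · exact absurd (c2.2.symm.trans c2.1) hxy
    · exact hd i
  · intro i j hij
    by_cases hA : i = x ∧ j = y
    · obtain ⟨rfl, rfl⟩ := hA
      simp [hxy, Ne.symm hxy]
    · by_cases hB : i = y ∧ j = x
      · obtain ⟨rfl, rfl⟩ := hB
        simp [hxy, Ne.symm hxy]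
      · have hA' : ¬(j = y ∧ i = x) := fun h => hA ⟨h.2, h.1⟩
        have hB' : ¬(j = x ∧ i = y) := fun h => hB ⟨h.2, h.1⟩
        simp only [if_neg hA, if_neg hB, if_neg hA', if_neg hB']
        exact hs i j hij
  · have hrow : ∀ j, (if x = x ∧ j = y then 0 else if x = y ∧ j = x then 1 else M x j)
        = Function.update (M x) y 0 j := by
      intro j
      rw [Function.update_apply]
      by_cases hj : j = y <;> simp [hj, hxy]
    calc (∑ j, (if x = x ∧ j = y then 0 else if x = y ∧ j = x then 1 else M x j)) + 1
        = (∑ j, Function.update (M x) y 0 j) + 1 := by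
          rw [Finset.sum_congr rfl fun j _ => hrow j]
      _ = (0 + ∑ j ∈ univ.erase y, M x j) + 1 := by
          rw [Finset.sum_update_of_mem (mem_univ y), Finset.sdiff_singleton_eq_erase]
      _ = ∑ j ∈ univ.erase y, M x j + M x y := by rw [zero_add, h1]
      _ = ∑ j, M x j := Finset.sum_erase_add univ _ (mem_univ y)
  · have hrow : ∀ j, (if y = x ∧ j = y then 0 else if y = y ∧ j = x then 1 else M y j)
        = Function.update (M y) x 1 j := by
      intro j
      rw [Function.update_apply]
      by_cases hj : j = x <;> simp [hj, Ne.symm hxy]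
    calc (∑ j, (if y = x ∧ j = y then 0 else if y = y ∧ j = x then 1 else M y j))
        = ∑ j, Function.update (M y) x 1 j := Finset.sum_congr rfl fun j _ => hrow j
      _ = 1 + ∑ j ∈ univ.erase x, M y j := by
          rw [Finset.sum_update_of_mem (mem_univ x), Finset.sdiff_singleton_eq_erase]
      _ = (∑ j ∈ univ.erase x, M y j + M y x) + 1 := by rw [hyx0]; omega
      _ = (∑ j, M y j) + 1 := by rw [Finset.sum_erase_add univ _ (mem_univ x)]
  · intro i hix hiy
    refine Finset.sum_congr rfl fun j _ => ?_
    show (if i = x ∧ j = y then 0 else if i = y ∧ j = x then 1 else M i j) = M i j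
    rw [if_neg (fun h => hix h.1), if_neg (fun h => hiy h.1)]
  · intro i j hn1 hn2
    simp only [if_neg hn1, if_neg hn2]

lemma transfer (M : Fin n → Fin n → ℕ) (hd : ∀ i, M i i = 0)
    (hs : ∀ i j, i ≠ j → M i j + M j i = 1) (a b : Fin n) (hab : a ≠ b)
    (h2 : (∑ j, M a j) + 2 ≤ ∑ j, M b j) :
    ∃ M' : Fin n → Fin n → ℕ, (∀ i, M' i i = 0) ∧ (∀ i j, i ≠ j → M' i j + M' j i = 1) ∧
      (∑ j, M' a j = (∑ j, M a j) + 1) ∧ ((∑ j, M' b j) + 1 = ∑ j, M b j) ∧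
      (∀ i, i ≠ a → i ≠ b → ∑ j, M' i j = ∑ j, M i j) := by
  by_cases hba : M b a = 1
  · obtain ⟨M', h1, h2', h3, h4, h5, _⟩ := flipEdge M hd hs b a (Ne.symm hab) hba
    exact ⟨M', h1, h2', h4, h3, fun i hia hib => h5 i hib hia⟩
  · have hba0 : M b a = 0 := by have := hs b a (Ne.symm hab); omega
    have hab1 : M a b = 1 := by have := hs a b hab; omega
    have hk : ∃ k : Fin n, k ≠ a ∧ k ≠ b ∧ M b k = 1 ∧ M k a = 1 := by
      by_contra hcon
      push_neg at hcon
      have hbound : ∀ k ∈ (univ.erase b).erase a, M b k ≤ M a k := by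
        intro k hk'
        have hka := (Finset.mem_erase.mp hk').1
        have hkb := (Finset.mem_erase.mp (Finset.mem_erase.mp hk').2).1
        have e1 := hs b k (Ne.symm hkb)
        have e2 := hs k a hka
        have e3 := hcon k hka hkb
        rcases (by omega : M b k = 0 ∨ M b k = 1) with h | h
        · omega
        · have := e3 h; omega
      have hsum_b : ∑ j, M b j = ∑ j ∈ (univ.erase b).erase a, M b j := by
        have t1 : (∑ j ∈ univ.erase b, M b j) + M b b = ∑ j, M b j :=
          Finset.sum_erase_add univ _ (mem_univ b)
        have t2 : (∑ j ∈ (univ.erase b).erase a, M b j) + M b a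
            = ∑ j ∈ univ.erase b, M b j :=
          Finset.sum_erase_add _ _ (Finset.mem_erase.mpr ⟨hab, mem_univ a⟩)
        have := hd b
        omega
      have hsum_a : ∑ j, M a j = (∑ j ∈ (univ.erase b).erase a, M a j) + 1 := by
        have t1 : (∑ j ∈ univ.erase b, M a j) + M a b = ∑ j, M a j :=
          Finset.sum_erase_add univ _ (mem_univ b)
        have t2 : (∑ j ∈ (univ.erase b).erase a, M a j) + M a a
            = ∑ j ∈ univ.erase b, M a j :=
          Finset.sum_erase_add _ _ (Finset.mem_erase.mpr ⟨hab, mem_univ a⟩)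
        have := hd a
        omega
      have hle := Finset.sum_le_sum hbound
      omega
    obtain ⟨k, hka, hkb, hbk1, hka1⟩ := hk
    obtain ⟨M₁, g1, g2, g3, g4, g5, g6⟩ := flipEdge M hd hs b k (Ne.symm hkb) hbk1
    have hM1ka : M₁ k a = 1 := by
      rw [g6 k a (fun h => hkb h.1) (fun h => hab h.2)]
      exact hka1
    obtain ⟨M₂, f1, f2, f3, f4, f5, _⟩ := flipEdge M₁ g1 g2 k a hka hM1ka
    refine ⟨M₂, f1, f2, ?_, ?_, ?_⟩
    · rw [f4, g5 a hab (fun h => hka h.symm)]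
    · rw [f5 b (Ne.symm hkb) (Ne.symm hab)]; exact g3
    · intro i hia hib
      by_cases hik : i = k
      · subst hik
        omega
      · rw [f5 i hik hia, g5 i hib hik]


lemma suff (N : ℕ) (D : Fin n → ℕ) (hD : Monotone D)
    (hpre : ∀ m, m ≤ n → m.choose 2 ≤ S D m) (hsum : S D n = n.choose 2)
    (hN : (∑ i : Fin n, D i * (n - (i : ℕ))) < N) :
    ∃ M : Fin n → Fin n → ℕ, (∀ i, M i i = 0) ∧ (∀ i j, i ≠ j → M i j + M j i = 1) ∧
      ∀ i, (∑ j, M i j) = D i := by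
  induction N generalizing D with
  | zero => omega
  | succ N ih =>
    by_cases hid : ∀ i : Fin n, D i = (i : ℕ)
    · obtain ⟨M, h1, h2, h3⟩ := base (n := n)
      exact ⟨M, h1, h2, fun i => (h3 i).trans (hid i).symm⟩
    push_neg at hid
    have hFne : (univ.filter fun i : Fin n => D i ≠ (i : ℕ)).Nonempty := by
      obtain ⟨i, hi⟩ := hid; exact ⟨i, mem_filter.mpr ⟨mem_univ _, hi⟩⟩
    set a := (univ.filter fun i : Fin n => D i ≠ (i : ℕ)).min' hFne with ha_def
    have haF : D a ≠ (a : ℕ) := (mem_filter.mp (Finset.min'_mem _ hFne)).2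
    have hlt : ∀ i : Fin n, i < a → D i = (i : ℕ) := by
      intro i hi; by_contra hne
      exact absurd (Finset.min'_le _ i (mem_filter.mpr ⟨mem_univ _, hne⟩)) (not_le.mpr hi)
    have hSid : ∀ m, m ≤ (a : ℕ) → S D m = m.choose 2 := by
      intro m
      induction m with
      | zero => intro _; simp [S_zero]
      | succ k ihk =>
        intro hk
        have hkn : k < n := by have := a.isLt; omega
        have hka : (⟨k, hkn⟩ : Fin n) < a := by
          rw [Fin.lt_def]; simpa using (by omega : k < (a : ℕ))
        have hv : D ⟨k, hkn⟩ = k := by simpa using hlt ⟨k, hkn⟩ hka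
        rw [S_succ D k hkn, ihk (by omega), hv, choose_succ]
    have hS1 : S D ((a : ℕ) + 1) = (a : ℕ).choose 2 + D a := by
      rw [S_succ D (a : ℕ) a.isLt, hSid _ le_rfl]
    have haval : (a : ℕ) + 1 ≤ D a := by
      have h2 := hpre ((a : ℕ) + 1) a.isLt
      have h3 := choose_succ (a : ℕ)
      omega
    have hanm : (a : ℕ) < n - 1 := by
      by_contra hcon
      have hav : ((a : ℕ) + 1) = n := by have := a.isLt; omega
      have h1 : S D ((a : ℕ) + 1) = ((a : ℕ) + 1).choose 2 := by rw [hav, hsum]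
      have h3 := choose_succ (a : ℕ)
      omega
    have hex : ∃ j, (a : ℕ) < j ∧ j < n ∧ S D (j + 1) = (j + 1).choose 2 := by
      refine ⟨n - 1, hanm, by omega, ?_⟩
      have hone : n - 1 + 1 = n := by omega
      rw [hone, hsum]
    set bb := Nat.find hex with hbb_def
    obtain ⟨hab, hbn, hSb⟩ : (a : ℕ) < bb ∧ bb < n ∧ S D (bb + 1) = (bb + 1).choose 2 :=
      Nat.find_spec hex
    have hstrict : ∀ m, (a : ℕ) < m → m ≤ bb → m.choose 2 + 1 ≤ S D m := by
      intro m h1 h2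
      rcases eq_or_lt_of_le (show (a : ℕ) + 1 ≤ m by omega) with heq | hlt2
      · have h3 := choose_succ (a : ℕ)
        rw [← heq]
        omega
      · have hml := hpre m (by omega)
        rcases eq_or_lt_of_le hml with heq2 | hlt3
        · exfalso
          exact Nat.find_min hex (by omega : m - 1 < bb)
            ⟨by omega, by omega, by rw [show m - 1 + 1 = m by omega]; exact heq2.symm⟩
        · omega
    set b : Fin n := ⟨bb, hbn⟩ with hb_def
    have hbval : (b : ℕ) = bb := rfl
    have habf : a ≠ b := by
      intro h
      have : (a : ℕ) = bb := by rw [h]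
      omega
    have hDble : D b ≤ bb := by
      have h1 : S D (bb + 1) = S D bb + D b := S_succ D bb hbn
      have h2 := hpre bb (by omega)
      have h3 := choose_succ bb
      omega
    have hnext : ∀ hb2 : bb + 1 < n, bb + 1 ≤ D ⟨bb + 1, hb2⟩ := by
      intro hb2
      have h1 : S D (bb + 2) = S D (bb + 1) + D ⟨bb + 1, hb2⟩ := S_succ D (bb + 1) hb2
      have h2 := hpre (bb + 2) (by omega)
      have h3 := choose_succ (bb + 1)
      rw [show bb + 1 + 1 = bb + 2 from rfl] at h3
      omega
    set D' : Fin n → ℕ := fun i => if i = a then D a - 1 else if i = b then D b + 1 else D i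
      with hD'def
    have hD'a : D' a = D a - 1 := by simp [hD'def]
    have hD'b : D' b = D b + 1 := by simp [hD'def, Ne.symm habf]
    have hD'o : ∀ i, i ≠ a → i ≠ b → D' i = D i := by
      intro i h1 h2; simp [hD'def, h1, h2]
    have hmono' : Monotone D' := by
      intro i j hij
      rcases eq_or_lt_of_le hij with rfl | hlt0
      · exact le_rfl
      have hvlt : (i : ℕ) < (j : ℕ) := hlt0
      by_cases hja : j = a
      · have hina : i ≠ a := ne_of_lt (hja ▸ hlt0)
        have hinb : i ≠ b := by
          intro h
          have : (i : ℕ) = bb := by rw [h]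
          have : (j : ℕ) = (a : ℕ) := by rw [hja]
          omega
        have hl : D i = (i : ℕ) := hlt i (hja ▸ hlt0)
        rw [hja, hD'o i hina hinb, hD'a, hl]
        have : (j : ℕ) = (a : ℕ) := by rw [hja]
        omega
      · by_cases hjb : j = b
        · rw [hjb, hD'b]
          by_cases hia : i = a
          · rw [hia, hD'a]
            have := hD (le_of_lt hlt0)
            rw [hia, hjb] at this
            omega
          · have hib : i ≠ b := hjb ▸ ne_of_lt hlt0
            rw [hD'o i hia hib]
            have := hD (le_of_lt hlt0)
            rw [hjb] at this
            omega
        · rw [hD'o j hja hjb]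
          by_cases hia : i = a
          · rw [hia, hD'a]
            have := hD (le_of_lt hlt0)
            rw [hia] at this
            omega
          · by_cases hib : i = b
            · rw [hib, hD'b]
              have hj1 : bb + 1 ≤ (j : ℕ) := by
                have : (i : ℕ) = bb := by rw [hib]
                omega
              have hb2 : bb + 1 < n := lt_of_le_of_lt hj1 j.isLt
              have h4 := hnext hb2
              have h5 : D ⟨bb + 1, hb2⟩ ≤ D j := hD hj1
              omega
            · rw [hD'o i hia hib]
              exact hD (le_of_lt hlt0)
    have hSkey : ∀ m, S D' m + (if (a : ℕ) < m then 1 else 0)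
        = S D m + (if bb < m then 1 else 0) := by
      intro m
      have hpt : ∀ i : Fin n,
          (if (i : ℕ) < m then D' i else 0) + (if i = a then (if (i : ℕ) < m then 1 else 0) else 0)
          = (if (i : ℕ) < m then D i else 0) + (if i = b then (if (i : ℕ) < m then 1 else 0) else 0) := by
        intro i
        by_cases hia : i = a
        · rw [hia, if_pos rfl, if_neg habf, hD'a]
          split_ifs with h <;> omega
        · by_cases hib : i = b
          · rw [hib, if_neg (Ne.symm habf), if_pos rfl, hD'b]
            split_ifs with h <;> omega
          · rw [if_neg hia, if_neg hib, hD'o i hia hib]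
      have hkey := Finset.sum_congr rfl (fun i (_ : i ∈ univ) => hpt i)
      rw [Finset.sum_add_distrib, Finset.sum_add_distrib,
        Finset.sum_ite_eq' univ a, Finset.sum_ite_eq' univ b,
        if_pos (mem_univ a), if_pos (mem_univ b)] at hkey
      exact hkey
    have hsum' : S D' n = n.choose 2 := by
      have hk := hSkey n
      rw [if_pos a.isLt, if_pos hbn] at hk
      omega
    have hpre' : ∀ m, m ≤ n → m.choose 2 ≤ S D' m := by
      intro m hm
      have hk := hSkey m
      by_cases h1 : (a : ℕ) < m
      · by_cases h2 : m ≤ bb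
        · have h3 := hstrict m h1 h2
          rw [if_pos h1, if_neg (by omega)] at hk
          omega
        · rw [if_pos h1, if_pos (by omega)] at hk
          have := hpre m hm
          omega
      · rw [if_neg h1, if_neg (by omega)] at hk
        have := hpre m hm
        omega
    have hmeas : (∑ i : Fin n, D' i * (n - (i : ℕ))) + (n - (a : ℕ))
        = (∑ i : Fin n, D i * (n - (i : ℕ))) + (n - bb) := by
      have hpt : ∀ i : Fin n, D' i * (n - (i : ℕ)) + (if i = a then (n - ((a : ℕ))) else 0)
          = D i * (n - (i : ℕ)) + (if i = b then (n - bb) else 0) := by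
        intro i
        by_cases hia : i = a
        · rw [hia, if_pos rfl, if_neg habf, hD'a, add_zero]
          have hh : D a = (D a - 1) + 1 := by omega
          calc (D a - 1) * (n - (a : ℕ)) + (n - (a : ℕ))
              = ((D a - 1) + 1) * (n - (a : ℕ)) := by ring
            _ = D a * (n - (a : ℕ)) := by rw [← hh]
        · by_cases hib : i = b
          · rw [hib, if_neg (Ne.symm habf), if_pos rfl, hD'b, add_zero]
            have : ((b : Fin n) : ℕ) = bb := rfl
            rw [this]
            ring
          · rw [if_neg hia, if_neg hib, hD'o i hia hib]
      have hkey := Finset.sum_congr rfl (fun i (_ : i ∈ univ) => hpt i)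
      rw [Finset.sum_add_distrib, Finset.sum_add_distrib,
        Finset.sum_ite_eq' univ a, Finset.sum_ite_eq' univ b,
        if_pos (mem_univ a), if_pos (mem_univ b)] at hkey
      exact hkey
    have hmeas' : (∑ i : Fin n, D' i * (n - (i : ℕ))) < N := by
      have hvaln := a.isLt
      omega
    obtain ⟨M', hd', hs', hsc'⟩ := ih D' hmono' hpre' hsum' hmeas'
    have htr : (∑ j, M' a j) + 2 ≤ ∑ j, M' b j := by
      rw [hsc' a, hsc' b, hD'a, hD'b]
      have hDab : D a ≤ D b := hD (le_of_lt (show a < b by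
        rw [Fin.lt_def]; exact hab))
      omega
    obtain ⟨M, h1, h2, h3a, h3b, h3o⟩ := transfer M' hd' hs' a b habf htr
    refine ⟨M, h1, h2, fun i => ?_⟩
    by_cases hia : i = a
    · rw [hia, h3a, hsc' a, hD'a]
      omega
    · by_cases hib : i = b
      · have hbb' := h3b
        rw [hsc' b, hD'b] at hbb'
        rw [hib]
        omega
      · rw [h3o i hia hib, hsc' i, hD'o i hia hib]

end LandauAux

/-- Landau: For `n ≥ 2`, a nondecreasing sequence `D` of nonnegative
integers is the score sequence of some `(1,1,n)`-tournament (ordinary round robin) iff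
`∑ D = B_n` and `d_1 + ⋯ + d_m ≥ B_m` for every `1 ≤ m ≤ n − 1`, where `B_m = m(m-1)/2`. -/
theorem isScoreSeq_landau_iff (n : ℕ) (hn : 2 ≤ n) (D : Fin n → ℕ) (hD : Monotone D) :
    (∃ M : Fin n → Fin n → ℕ,
        (∀ i, M i i = 0) ∧
        (∀ i j, i ≠ j → M i j + M j i = 1) ∧
        (∀ i, ∑ j, M i j = D i)) ↔
      ((∑ i, D i) = n * (n - 1) / 2 ∧
        ∀ m : ℕ, 1 ≤ m → m ≤ n - 1 →
          m * (m - 1) / 2 ≤ ∑ i : Fin n, if (i : ℕ) < m then D i else 0) := by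
  open Finset LandauAux in
  constructor
  · rintro ⟨M, hd, hs, hsc⟩
    constructor
    · have hdc := double_count M hd hs univ
      have hcard : (univ : Finset (Fin n)).card = n := by simp
      rw [hcard] at hdc
      have he : ∑ i, D i = ∑ i, ∑ j, M i j :=
        Finset.sum_congr rfl fun i _ => (hsc i).symm
      rw [he, ← hdc, Nat.mul_div_cancel_left _ (by norm_num : 0 < 2)]
    · intro m h1m hmn1
      set P := (univ : Finset (Fin n)).filter fun i : Fin n => (i : ℕ) < m with hP
      have hcP : P.card = m := card_lem m (by omega)
      have hdc := double_count M hd hs P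
      rw [hcP] at hdc
      have hle : ∑ i ∈ P, ∑ j ∈ P, M i j ≤ ∑ i ∈ P, D i := by
        refine Finset.sum_le_sum fun i _ => ?_
        rw [← hsc i]
        exact Finset.sum_le_sum_of_subset (Finset.subset_univ P)
      have hPsum : ∑ i ∈ P, D i = ∑ i : Fin n, if (i : ℕ) < m then D i else 0 :=
        Finset.sum_filter _ _
      have hdiv : m * (m - 1) / 2 = ∑ i ∈ P, ∑ j ∈ P, M i j := by
        rw [← hdc, Nat.mul_div_cancel_left _ (by norm_num : 0 < 2)]
      rw [hdiv, ← hPsum]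
      exact hle
  · rintro ⟨ht, hp⟩
    have hpre : ∀ m, m ≤ n → m.choose 2 ≤ S D m := by
      intro m hm
      rcases Nat.eq_zero_or_pos m with rfl | hm1
      · simp
      · rcases eq_or_lt_of_le hm with rfl | hmlt
        · rw [S_top, ht, Nat.choose_two_right]
        · have := hp m hm1 (by omega)
          rw [Nat.choose_two_right]
          exact this
    have hsum : S D n = n.choose 2 := by rw [S_top, ht, Nat.choose_two_right]
    exact suff ((∑ i : Fin n, D i * (n - (i : ℕ))) + 1) D hD hpre hsum (Nat.lt_succ_self _)
end
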